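/- arXiv:2305.16210 — 3 statements merged into one kernel-verified Lean document; each statement's English description precedes it below -/
import Mathlib

section
/- Let b ∈ ℂ with |b| ≤ 1 and set ñ = 2|b|. Then every f ∈ K¹_b satisfies, for every z ∈ 𝔻 \ {0} with r = |z|, the disc inequality |z·f'(z)/f(z) − (1 + r⁴)/(1 − r⁴)| ≤ (ñ r + 6 r² + 4 ñ r³ + 6 r⁴ + ñ r⁵) / ((1 + ñ r + r²)(1 − r⁴)). -/
open Complex Real Metric Set

noncomputable def Complex.abs : AbsoluteValue ℂ ℝ where
  toFun := fun z => ‖z‖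
  map_mul' := norm_mul
  nonneg' := norm_nonneg
  eq_zero' := fun _ => norm_eq_zero
  add_le' := norm_add_le

lemma Complex.norm_eq_abs (z : ℂ) : ‖z‖ = Complex.abs z := rfl

lemma Complex.abs_conj (z : ℂ) : Complex.abs ((starRingEnd ℂ) z) = Complex.abs z := by
  rw [← Complex.norm_eq_abs, ← Complex.norm_eq_abs, Complex.norm_conj]

lemma Complex.sq_abs (z : ℂ) : Complex.abs z ^ 2 = Complex.normSq z := Complex.sq_norm z

lemma Complex.abs_ofReal (r : ℝ) : Complex.abs (r : ℂ) = |r| := by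
  rw [← Complex.norm_eq_abs, Complex.norm_real, Real.norm_eq_abs]

lemma Complex.abs_two : Complex.abs (2 : ℂ) = 2 := by
  rw [← Complex.norm_eq_abs]; norm_num

lemma Complex.re_le_abs (z : ℂ) : z.re ≤ Complex.abs z := Complex.re_le_norm z

lemma den_ne {a v : ℂ} (h : Complex.abs a * Complex.abs v < 1) : 1 - (starRingEnd ℂ) a * v ≠ 0 := by
  intro h0
  have h1 : (starRingEnd ℂ) a * v = 1 := by linear_combination -h0
  have h2 := congrArg Complex.abs h1
  rw [map_mul, map_one, Complex.abs_conj] at h2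
  rw [h2] at h
  exact lt_irrefl 1 h

lemma mob_abs_le {b x : ℂ} (hb : Complex.abs b ≤ 1) (hx : Complex.abs x ≤ 1)
    (hm : Complex.abs b * Complex.abs x < 1) :
    Complex.abs ((x + b) / (1 + (starRingEnd ℂ) b * x)) * (1 + Complex.abs b * Complex.abs x)
      ≤ Complex.abs x + Complex.abs b := by
  have hd : (1:ℂ) + (starRingEnd ℂ) b * x ≠ 0 := by
    have := den_ne (a := -b) (v := x) (by simpa using hm)
    simpa [map_neg, neg_mul, sub_neg_eq_add] using this
  have hdp : 0 < Complex.abs (1 + (starRingEnd ℂ) b * x) := by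
    simpa [Complex.abs.pos_iff] using hd
  rw [map_div₀, div_mul_eq_mul_div, div_le_iff₀ hdp]
  set X := Complex.abs x with hX
  set β := Complex.abs b with hβ
  have hX0 : 0 ≤ X := Complex.abs.nonneg x
  have hβ0 : 0 ≤ β := Complex.abs.nonneg b
  apply le_of_pow_le_pow_left₀ two_ne_zero (by positivity)
  have e : (x * (starRingEnd ℂ) b).re ≤ β * X := by
    calc (x * (starRingEnd ℂ) b).re ≤ Complex.abs (x * (starRingEnd ℂ) b) := Complex.re_le_abs _
    _ = β * X := by rw [map_mul, Complex.abs_conj]; ring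
  have h1 : (Complex.abs (x + b))^2 = X^2 + β^2 + 2*(x * (starRingEnd ℂ) b).re := by
    rw [Complex.sq_abs, Complex.normSq_add, ← Complex.sq_abs, ← Complex.sq_abs]
  have h2 : (Complex.abs (1 + (starRingEnd ℂ) b * x))^2
      = 1 + β^2*X^2 + 2*(x * (starRingEnd ℂ) b).re := by
    rw [Complex.sq_abs, Complex.normSq_add]
    have h3 : ((1:ℂ) * (starRingEnd ℂ) ((starRingEnd ℂ) b * x)).re = (x * (starRingEnd ℂ) b).re := by
      simp [mul_comm]
    rw [h3, Complex.normSq_one, Complex.normSq_mul, Complex.normSq_conj,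
      ← Complex.sq_abs, ← Complex.sq_abs]
  rw [mul_pow, mul_pow, h1, h2]
  nlinarith [mul_nonneg (mul_nonneg (sub_nonneg.2 e) (sub_nonneg.2 (by nlinarith : β^2 ≤ 1)))
      (sub_nonneg.2 (by nlinarith : X^2 ≤ 1))]

lemma abs_quad (z : ℂ) :
    Complex.abs (z^2 - (((Complex.abs z)^4 : ℝ) : ℂ))
      = (Complex.abs z)^2 * Complex.abs (1 - z^2) := by
  have h0 : z.re^2 + z.im^2 = (Complex.abs z)^2 := by
    rw [Complex.sq_abs, Complex.normSq_apply]; ring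
  have hA : 0 ≤ Complex.abs (z^2 - (((Complex.abs z)^4 : ℝ) : ℂ)) := Complex.abs.nonneg _
  have hB : 0 ≤ (Complex.abs z)^2 * Complex.abs (1 - z^2) := by positivity
  have e1 : (Complex.abs (1 - z^2))^2 = (1 - (z.re^2 - z.im^2))^2 + (2*z.re*z.im)^2 := by
    rw [Complex.sq_abs, Complex.normSq_apply]
    simp only [Complex.sub_re, Complex.sub_im, pow_two, Complex.mul_re, Complex.mul_im,
      Complex.one_re, Complex.one_im]
    ring
  have e2 : (Complex.abs (z^2 - (((Complex.abs z)^4 : ℝ) : ℂ)))^2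
      = (z.re^2 - z.im^2 - (Complex.abs z)^4)^2 + (2*z.re*z.im)^2 := by
    rw [Complex.sq_abs, Complex.normSq_apply]
    simp only [Complex.sub_re, Complex.sub_im, pow_two, Complex.mul_re, Complex.mul_im,
      Complex.ofReal_re, Complex.ofReal_im]
    ring
  have hsq : (Complex.abs (z^2 - (((Complex.abs z)^4 : ℝ) : ℂ)))^2
      = ((Complex.abs z)^2 * Complex.abs (1 - z^2))^2 := by
    rw [mul_pow, e2, e1]
    linear_combination ((z.re^2 + z.im^2 + (Complex.abs z)^2) * (1 - (Complex.abs z)^4)) * h0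
  calc Complex.abs (z^2 - (((Complex.abs z)^4 : ℝ) : ℂ))
      = Real.sqrt ((Complex.abs (z^2 - (((Complex.abs z)^4 : ℝ) : ℂ)))^2) := (Real.sqrt_sq hA).symm
    _ = Real.sqrt (((Complex.abs z)^2 * Complex.abs (1 - z^2))^2) := by rw [hsq]
    _ = (Complex.abs z)^2 * Complex.abs (1 - z^2) := Real.sqrt_sq hB

lemma mob_lt_one {a v : ℂ} (ha : Complex.abs a < 1) (hv : Complex.abs v < 1) :
    Complex.abs ((v - a) / (1 - (starRingEnd ℂ) a * v)) < 1 := by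
  have hm : Complex.abs a * Complex.abs v < 1 := by
    nlinarith [Complex.abs.nonneg a, Complex.abs.nonneg v]
  have hd : 1 - (starRingEnd ℂ) a * v ≠ 0 := den_ne hm
  have hdp : 0 < Complex.abs (1 - (starRingEnd ℂ) a * v) := by
    simpa [Complex.abs.pos_iff] using hd
  rw [map_div₀, div_lt_one hdp]
  have h1 : (Complex.abs (v - a))^2 < (Complex.abs (1 - (starRingEnd ℂ) a * v))^2 := by
    rw [Complex.sq_abs, Complex.sq_abs, Complex.normSq_sub, Complex.normSq_sub]
    have e1 : Complex.normSq ((starRingEnd ℂ) a * v) = Complex.normSq a * Complex.normSq v := by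
      rw [Complex.normSq_mul, Complex.normSq_conj]
    have e2 : ((1:ℂ) * (starRingEnd ℂ) ((starRingEnd ℂ) a * v)).re = (v * (starRingEnd ℂ) a).re := by
      simp [mul_comm]
    have h3 : Complex.normSq a < 1 := by
      rw [← Complex.sq_abs]; nlinarith [Complex.abs.nonneg a]
    have h4 : Complex.normSq v < 1 := by
      rw [← Complex.sq_abs]; nlinarith [Complex.abs.nonneg v]
    rw [e1, e2, Complex.normSq_one]
    nlinarith [Complex.normSq_nonneg a, Complex.normSq_nonneg v]
  exact lt_of_pow_lt_pow_left₀ 2 (Complex.abs.nonneg _) h1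

lemma real_bound (r β t U : ℝ) (hr0 : 0 ≤ r) (hr1 : r < 1) (hβ0 : 0 ≤ β) (hβ1 : β ≤ 1)
    (ht0 : 0 ≤ t) (ht1 : t ≤ 1) (hU0 : 0 ≤ U)
    (ht : t * (1 + β*r) ≤ β + r) (hU : U * (1 - r^2) ≤ 1 - t^2) :
    2*r^2/(1-r^4) + 2*r*(t + r*U)/(1 - r^2*t^2)
      ≤ (2*β*r + 6*r^2 + 4*(2*β)*r^3 + 6*r^4 + 2*β*r^5)/((1 + 2*β*r + r^2)*(1-r^4)) := by
  have h1 : 0 < 1 - r^2 := by nlinarith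
  have h4 : 0 < 1 - r^4 := by nlinarith
  have hrt : 0 < 1 - r^2*t^2 := by nlinarith
  have hrt1 : 0 < 1 + r*t := by nlinarith
  have hden : 0 < 1 + 2*β*r + r^2 := by nlinarith
  -- step 1
  have s1 : 2*r*(t + r*U)/(1 - r^2*t^2) ≤ 2*r*(r + t)/((1-r^2)*(1 + r*t)) := by
    rw [div_le_div_iff₀ hrt (by positivity)]
    nlinarith [mul_le_mul_of_nonneg_left hU (by positivity : (0:ℝ) ≤ 2*r^2*(1+r*t)),
      mul_nonneg hr0 ht0]
  -- step 2
  have s2 : 2*r*(r + t)/((1-r^2)*(1 + r*t)) ≤ 2*r*(β + 2*r + β*r^2)/((1-r^2)*(1 + 2*β*r + r^2)) := by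
    rw [div_le_div_iff₀ (by positivity) (by positivity)]
    nlinarith [mul_le_mul_of_nonneg_left ht (by positivity : (0:ℝ) ≤ 2*r*(1-r^2)),
      mul_nonneg (mul_nonneg hr0 hr0) (sub_nonneg.2 ht)]
  -- step 3 (exact identity)
  have s3 : 2*r^2/(1-r^4) + 2*r*(β + 2*r + β*r^2)/((1-r^2)*(1 + 2*β*r + r^2))
      = (2*β*r + 6*r^2 + 4*(2*β)*r^3 + 6*r^4 + 2*β*r^5)/((1 + 2*β*r + r^2)*(1-r^4)) := by
    field_simp
    ring
  linarith [s1, s2]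

/-- If `|φ|≤1` on the disc and it attains `1`, then `φ` is constant on the disc. -/
lemma const_of_abs_eq_one {φ : ℂ → ℂ} (hd : DifferentiableOn ℂ φ (ball 0 1))
    (hle : ∀ x ∈ ball (0:ℂ) 1, Complex.abs (φ x) ≤ 1)
    {z₁ : ℂ} (hz₁ : z₁ ∈ ball (0:ℂ) 1) (h1 : Complex.abs (φ z₁) = 1) :
    EqOn φ (Function.const ℂ (φ z₁)) (ball (0:ℂ) 1) := by
  apply Complex.eqOn_of_isPreconnected_of_isMaxOn_norm (convex_ball _ _).isPreconnected
    isOpen_ball hd hz₁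
  intro x hx
  simp only [Function.comp_apply, Complex.norm_eq_abs, Set.mem_setOf_eq]
  rw [h1]
  exact hle x hx


/-- Schwarz–Pick, value version (multiplied form). -/
lemma SP_val {φ : ℂ → ℂ} (hd : DifferentiableOn ℂ φ (ball 0 1))
    (hle : ∀ x ∈ ball (0:ℂ) 1, Complex.abs (φ x) ≤ 1) {z : ℂ} (hz : z ∈ ball (0:ℂ) 1) :
    Complex.abs (φ z) * (1 + Complex.abs (φ 0) * Complex.abs z)
      ≤ Complex.abs (φ 0) + Complex.abs z := by
  have h0m : (0:ℂ) ∈ ball (0:ℂ) 1 := by simp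
  have hzr : Complex.abs z < 1 := by simpa [mem_ball, dist_eq_norm, Complex.norm_eq_abs] using hz
  by_cases hcase : ∀ x ∈ ball (0:ℂ) 1, Complex.abs (φ x) < 1
  · -- main case
    have hβ : Complex.abs (φ 0) < 1 := hcase 0 h0m
    set b := φ 0 with hbdef
    set h : ℂ → ℂ := fun x => (φ x - b) / (1 - (starRingEnd ℂ) b * φ x) with hdef
    have hden : ∀ x ∈ ball (0:ℂ) 1, 1 - (starRingEnd ℂ) b * φ x ≠ 0 := fun x hx =>
      den_ne (by nlinarith [hcase x hx, Complex.abs.nonneg b, Complex.abs.nonneg (φ x)])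
    have hhd : DifferentiableOn ℂ h (ball 0 1) := by
      apply DifferentiableOn.div (hd.sub_const b)
        (((hd.const_mul _)).const_sub 1) hden
    have hmaps : MapsTo h (ball 0 1) (ball (0:ℂ) 1) := by
      intro x hx
      simpa [hdef, mem_ball, dist_eq_norm, Complex.norm_eq_abs] using mob_lt_one hβ (hcase x hx)
    have hh0 : h 0 = 0 := by simp [hdef, hbdef]
    have hsch : Complex.abs (h z) ≤ Complex.abs z :=
      Complex.norm_le_norm_of_mapsTo_ball hhd (hmaps.mono_right ball_subset_closedBall) hh0 hzr
    -- invert the Möbius transform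
    have hs1 : Complex.abs (h z) < 1 := lt_of_le_of_lt hsch hzr
    have hd2 : (1:ℂ) + (starRingEnd ℂ) b * h z ≠ 0 := by
      have := den_ne (a := -b) (v := h z)
        (by simpa using (by nlinarith [Complex.abs.nonneg b, Complex.abs.nonneg (h z)] :
          Complex.abs b * Complex.abs (h z) < 1))
      simpa [map_neg, neg_mul, sub_neg_eq_add] using this
    have hq := hden z hz
    have hcross : φ z * (1 + (starRingEnd ℂ) b * h z) = h z + b := by
      have hhz : h z = (φ z - b) / (1 - (starRingEnd ℂ) b * φ z) := by rw [hdef]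
      rw [hhz]
      have hq' : (1:ℂ) - φ z * (starRingEnd ℂ) b ≠ 0 := by rwa [mul_comm] at hq
      field_simp
      ring
    have hinv : (h z + b) / (1 + (starRingEnd ℂ) b * h z) = φ z := by
      rw [← hcross, mul_div_cancel_right₀ _ hd2]
    have key := mob_abs_le (le_of_lt hβ) (le_of_lt hs1)
      (by nlinarith [Complex.abs.nonneg b, Complex.abs.nonneg (h z)])
    rw [hinv] at key
    -- monotonicity in |h z|
    have ht1 : Complex.abs (φ z) ≤ 1 := hle z hz
    nlinarith [Complex.abs.nonneg (φ z), Complex.abs.nonneg b, Complex.abs.nonneg (h z),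
      Complex.abs.nonneg z,
      mul_le_mul_of_nonneg_left hsch (Complex.abs.nonneg b),
      mul_le_mul_of_nonneg_right hsch (sub_nonneg.2 hβ.le),
      mul_le_mul_of_nonneg_right ht1
        (mul_nonneg (Complex.abs.nonneg b) (sub_nonneg.2 hsch))]
  · -- constant case
    push_neg at hcase
    obtain ⟨z₁, hz₁, hge⟩ := hcase
    have h1 : Complex.abs (φ z₁) = 1 := le_antisymm (hle z₁ hz₁) hge
    have hc := const_of_abs_eq_one hd hle hz₁ h1
    have e0 : φ 0 = φ z₁ := hc h0m
    have ez : φ z = φ z₁ := hc hz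
    rw [e0, ez, h1]
    have : Complex.abs z ≤ 1 := hzr.le
    nlinarith [Complex.abs.nonneg z]

/-- Schwarz–Pick, derivative version. -/
lemma SP_deriv {φ : ℂ → ℂ} (hd : DifferentiableOn ℂ φ (ball 0 1))
    (hle : ∀ x ∈ ball (0:ℂ) 1, Complex.abs (φ x) ≤ 1) {z : ℂ} (hz : z ∈ ball (0:ℂ) 1) :
    Complex.abs (deriv φ z) * (1 - (Complex.abs z)^2) ≤ 1 - (Complex.abs (φ z))^2 := by
  have hzr : Complex.abs z < 1 := by simpa [mem_ball, dist_eq_norm, Complex.norm_eq_abs] using hz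
  by_cases hcase : ∀ x ∈ ball (0:ℂ) 1, Complex.abs (φ x) < 1
  · set a := φ z with hadef
    have hta : Complex.abs a < 1 := hcase z hz
    -- the Möbius map m : ball → ball with m 0 = z
    set m : ℂ → ℂ := fun ζ => (ζ + z) / (1 + (starRingEnd ℂ) z * ζ) with hmdef
    have hmden : ∀ ζ ∈ ball (0:ℂ) 1, (1:ℂ) + (starRingEnd ℂ) z * ζ ≠ 0 := by
      intro ζ hζ
      have hζr : Complex.abs ζ < 1 := by simpa [mem_ball, dist_eq_norm, Complex.norm_eq_abs] using hζ
      have := den_ne (a := -z) (v := ζ)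
        (by simpa using (by nlinarith [Complex.abs.nonneg z, Complex.abs.nonneg ζ] :
          Complex.abs z * Complex.abs ζ < 1))
      simpa [map_neg, neg_mul, sub_neg_eq_add] using this
    have hmmaps : MapsTo m (ball (0:ℂ) 1) (ball (0:ℂ) 1) := by
      intro ζ hζ
      have hζr : Complex.abs ζ < 1 := by simpa [mem_ball, dist_eq_norm, Complex.norm_eq_abs] using hζ
      have h := mob_lt_one (a := -z) (v := ζ) (by simpa using hzr) hζr
      simp only [map_neg, neg_mul, sub_neg_eq_add] at h
      simpa [hmdef, mem_ball, dist_eq_norm, Complex.norm_eq_abs] using h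
    have hmd : DifferentiableOn ℂ m (ball 0 1) :=
      DifferentiableOn.div ((differentiable_id.add_const z).differentiableOn)
        (((differentiable_id.const_mul _).const_add 1).differentiableOn) hmden
    have hm0 : m 0 = z := by simp [hmdef]
    -- G = σ_a ∘ φ ∘ m
    set G : ℂ → ℂ := fun ζ => (φ (m ζ) - a) / (1 - (starRingEnd ℂ) a * φ (m ζ)) with hGdef
    have hGden : ∀ ζ ∈ ball (0:ℂ) 1, 1 - (starRingEnd ℂ) a * φ (m ζ) ≠ 0 := by
      intro ζ hζ
      exact den_ne (by nlinarith [hcase (m ζ) (hmmaps hζ), Complex.abs.nonneg a,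
        Complex.abs.nonneg (φ (m ζ))])
    have hGd : DifferentiableOn ℂ G (ball 0 1) := by
      have hφm : DifferentiableOn ℂ (fun ζ => φ (m ζ)) (ball 0 1) := hd.comp hmd hmmaps
      exact DifferentiableOn.div (hφm.sub_const a) ((hφm.const_mul _).const_sub 1) hGden
    have hGmaps : MapsTo G (ball (0:ℂ) 1) (ball (0:ℂ) 1) := by
      intro ζ hζ
      simpa [hGdef, mem_ball, dist_eq_norm, Complex.norm_eq_abs] using mob_lt_one hta (hcase (m ζ) (hmmaps hζ))
    have hG0 : G 0 = 0 := by simp [hGdef, hm0, hadef]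
    have hsch : Complex.abs (deriv G 0) ≤ 1 :=
      Complex.norm_deriv_le_one_of_mapsTo_ball hGd (by rw [hG0]; exact hGmaps.mono_right ball_subset_closedBall) one_pos
    -- compute deriv G 0
    have h0b : (0:ℂ) ∈ ball (0:ℂ) 1 := by simp
    have hφz : HasDerivAt φ (deriv φ z) z :=
      (hd.differentiableAt (isOpen_ball.mem_nhds hz)).hasDerivAt
    have hmden0 : (1:ℂ) + (starRingEnd ℂ) z * 0 ≠ 0 := hmden 0 h0b
    have hm' : HasDerivAt m (1 - (starRingEnd ℂ) z * z) 0 := by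
      have h1 : HasDerivAt (fun ζ : ℂ => ζ + z) 1 0 := (hasDerivAt_id 0).add_const z
      have h2 : HasDerivAt (fun ζ : ℂ => 1 + (starRingEnd ℂ) z * ζ) ((starRingEnd ℂ) z) 0 := by
        simpa using ((hasDerivAt_id 0).const_mul ((starRingEnd ℂ) z)).const_add 1
      have := h1.div h2 hmden0
      refine this.congr_deriv ?_
      simp only [mul_zero, add_zero, one_pow, div_one, zero_add, one_mul]
      ring
    have hφzm : HasDerivAt φ (deriv φ z) (m 0) := hm0 ▸ hφz
    have hφm' : HasDerivAt (fun ζ => φ (m ζ)) (deriv φ z * (1 - (starRingEnd ℂ) z * z)) 0 :=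
      hφzm.comp 0 hm'
    have hψ0 : φ (m 0) = a := by rw [hm0]
    have hden' : 1 - (starRingEnd ℂ) a * φ (m 0) ≠ 0 := hGden 0 h0b
    have hdena : (1:ℂ) - (starRingEnd ℂ) a * a ≠ 0 := by rwa [hψ0] at hden'
    set d : ℂ := deriv φ z * (1 - (starRingEnd ℂ) z * z) with hddef
    have hG' : HasDerivAt G
        ((d * (1 - (starRingEnd ℂ) a * φ (m 0)) - (φ (m 0) - a) * (-((starRingEnd ℂ) a * d)))
          / (1 - (starRingEnd ℂ) a * φ (m 0))^2) 0 := by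
      have hnum : HasDerivAt (fun ζ => φ (m ζ) - a) d 0 := hφm'.sub_const a
      have hden2 : HasDerivAt (fun ζ => 1 - (starRingEnd ℂ) a * φ (m ζ))
          (-((starRingEnd ℂ) a * d)) 0 := (hφm'.const_mul _).const_sub 1
      exact hnum.div hden2 hden'
    have hderivG0 : deriv G 0 = d / (1 - (starRingEnd ℂ) a * a) := by
      rw [hG'.deriv, hψ0]
      field_simp
      ring
    have e1 : (1:ℂ) - (starRingEnd ℂ) a * a = ((1 - (Complex.abs a)^2 : ℝ) : ℂ) := by
      rw [mul_comm, Complex.mul_conj, ← Complex.sq_abs]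
      push_cast
      ring
    have e2 : (1:ℂ) - (starRingEnd ℂ) z * z = ((1 - (Complex.abs z)^2 : ℝ) : ℂ) := by
      rw [mul_comm, Complex.mul_conj, ← Complex.sq_abs]
      push_cast
      ring
    have ht2 : (0:ℝ) < 1 - (Complex.abs a)^2 := by nlinarith [Complex.abs.nonneg a]
    have hr2 : (0:ℝ) < 1 - (Complex.abs z)^2 := by nlinarith [Complex.abs.nonneg z]
    have habs : Complex.abs (deriv G 0)
        = Complex.abs (deriv φ z) * (1 - (Complex.abs z)^2) / (1 - (Complex.abs a)^2) := by
      rw [hderivG0, map_div₀, hddef, map_mul, e1, e2, Complex.abs_ofReal, Complex.abs_ofReal,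
        abs_of_pos ht2, abs_of_pos hr2]
    rw [habs] at hsch
    rw [div_le_one ht2] at hsch
    exact hsch
  · push_neg at hcase
    obtain ⟨z₁, hz₁, hge⟩ := hcase
    have h1 : Complex.abs (φ z₁) = 1 := le_antisymm (hle z₁ hz₁) hge
    have hc := const_of_abs_eq_one hd hle hz₁ h1
    have ez : φ z = φ z₁ := hc hz
    have hderiv0 : deriv φ z = 0 := by
      have : φ =ᶠ[nhds z] Function.const ℂ (φ z₁) :=
        Filter.eventuallyEq_of_mem (isOpen_ball.mem_nhds hz) hc
      rw [this.deriv_eq]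
      exact deriv_const _ _
    rw [hderiv0, ez, h1]
    norm_num

lemma one_sub_ne {c : ℂ} (h : Complex.abs c < 1) : (1:ℂ) - c ≠ 0 := by
  intro h0
  have : c = 1 := by linear_combination -h0
  rw [this] at h; simp at h


set_option maxHeartbeats 1000000 in
theorem stmt_6 (b : ℂ) (hb : ‖b‖ ≤ 1)
    (n : ℝ) (hn : n = 2 * ‖b‖)
    (f : ℂ → ℂ) (hf : AnalyticOnNhd ℂ f (Metric.ball (0:ℂ) 1))
    (hf0 : f 0 = 0) (hf1 : deriv f 0 = 1)
    (hf2 : iteratedDeriv 2 f 0 / 2 = 2 * b)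
    (hfP : ∀ z ∈ Metric.ball (0:ℂ) 1, z ≠ 0 → 0 < (f z * (1 - z ^ 2) / z).re) :
    ∀ z ∈ Metric.ball (0:ℂ) 1, z ≠ 0 →
      ‖z * deriv f z / f z -
          (((1 + (‖z‖) ^ 4) / (1 - (‖z‖) ^ 4) : ℝ) : ℂ)‖ ≤
        (n * ‖z‖ + 6 * (‖z‖) ^ 2 + 4 * n * (‖z‖) ^ 3 +
            6 * (‖z‖) ^ 4 + n * (‖z‖) ^ 5) /
          ((1 + n * ‖z‖ + (‖z‖) ^ 2) * (1 - (‖z‖) ^ 4)) := by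
  
  have hb : Complex.abs b ≤ 1 := hb
  have hn : n = 2 * Complex.abs b := hn
  show ∀ z ∈ Metric.ball (0:ℂ) 1, z ≠ 0 →
      Complex.abs (z * deriv f z / f z -
          (((1 + (Complex.abs z) ^ 4) / (1 - (Complex.abs z) ^ 4) : ℝ) : ℂ)) ≤
        (n * Complex.abs z + 6 * (Complex.abs z) ^ 2 + 4 * n * (Complex.abs z) ^ 3 +
            6 * (Complex.abs z) ^ 4 + n * (Complex.abs z) ^ 5) /
          ((1 + n * Complex.abs z + (Complex.abs z) ^ 2) * (1 - (Complex.abs z) ^ 4))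
  have hball : ball (0:ℂ) 1 ∈ nhds (0:ℂ) := isOpen_ball.mem_nhds (by simp)
  have h0b : (0:ℂ) ∈ ball (0:ℂ) 1 := by simp
  have hfd : DifferentiableOn ℂ f (ball 0 1) :=
    fun x hx => (hf x hx).differentiableAt.differentiableWithinAt
  set g := dslope f 0 with hgdef
  have hgd : DifferentiableOn ℂ g (ball 0 1) := (Complex.differentiableOn_dslope hball).2 hfd
  have hg0 : g 0 = 1 := by rw [hgdef, dslope_same, hf1]
  have hfzg : ∀ x : ℂ, f x = x * g x := by
    intro x
    have h := sub_smul_dslope f 0 x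
    simp only [sub_zero, hf0, smul_eq_mul] at h
    rw [← h]
  have habsmem : ∀ x : ℂ, x ∈ ball (0:ℂ) 1 → Complex.abs x < 1 := by
    intro x hx; simpa [Complex.norm_eq_abs] using mem_ball_zero_iff.1 hx
  have hsq_ne : ∀ x : ℂ, x ∈ ball (0:ℂ) 1 → (1:ℂ) - x^2 ≠ 0 := by
    intro x hx
    apply one_sub_ne
    have := habsmem x hx
    rw [map_pow]
    nlinarith [Complex.abs.nonneg x]
  -- positivity of p = g * (1 - x^2)
  have hp_re : ∀ x ∈ ball (0:ℂ) 1, 0 < (g x * (1 - x^2)).re := by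
    intro x hx
    rcases eq_or_ne x 0 with rfl | hx0
    · simp [hg0]
    · have h1 := hfP x hx hx0
      have h2 : f x * (1 - x^2) / x = g x * (1 - x^2) := by
        rw [hfzg x]; field_simp
      rwa [h2] at h1
  have hpden : ∀ x ∈ ball (0:ℂ) 1, g x * (1 - x^2) + 1 ≠ 0 := by
    intro x hx h0
    have h1 := hp_re x hx
    have h2 : g x * (1-x^2) = -1 := by linear_combination h0
    rw [h2] at h1
    norm_num at h1
  set w : ℂ → ℂ := fun x => (g x * (1 - x^2) - 1) / (g x * (1 - x^2) + 1) with hwdef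
  have hPd : DifferentiableOn ℂ (fun x : ℂ => g x * (1 - x^2)) (ball 0 1) :=
    hgd.mul (((differentiable_const (1:ℂ)).sub (differentiable_id.pow 2)).differentiableOn)
  have hwd : DifferentiableOn ℂ w (ball 0 1) :=
    (hPd.sub_const 1).div (hPd.add_const 1) hpden
  have hw0 : w 0 = 0 := by simp [hwdef, hg0]
  have hwlt : ∀ x ∈ ball (0:ℂ) 1, Complex.abs (w x) < 1 := by
    intro x hx
    have hre := hp_re x hx
    have hdne := hpden x hx
    have hdp : 0 < Complex.abs (g x * (1 - x^2) + 1) := by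
      simpa [Complex.abs.pos_iff] using hdne
    rw [hwdef]
    simp only
    rw [map_div₀, div_lt_one hdp]
    have hsq : (Complex.abs (g x * (1-x^2) - 1))^2 < (Complex.abs (g x * (1-x^2) + 1))^2 := by
      rw [Complex.sq_abs, Complex.sq_abs, Complex.normSq_sub, Complex.normSq_add]
      have e : ((g x * (1-x^2)) * (starRingEnd ℂ) 1).re = (g x * (1-x^2)).re := by simp
      rw [e, Complex.normSq_one]
      linarith
    exact lt_of_pow_lt_pow_left₀ 2 (Complex.abs.nonneg _) hsq
  set φ := dslope w 0 with hφdef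
  have hφd : DifferentiableOn ℂ φ (ball 0 1) := (Complex.differentiableOn_dslope hball).2 hwd
  have hwmaps : MapsTo w (ball (0:ℂ) 1) (ball (w 0) 1) := by
    rw [hw0]
    intro x hx
    simpa [mem_ball_zero_iff, Complex.norm_eq_abs] using hwlt x hx
  have hφle : ∀ x ∈ ball (0:ℂ) 1, Complex.abs (φ x) ≤ 1 := by
    intro x hx
    have h := Complex.norm_dslope_le_div_of_mapsTo_ball hwd (hwmaps.mono_right ball_subset_closedBall) hx
    norm_num at h
    simpa [hφdef, Complex.norm_eq_abs] using h
  have hwxφ : ∀ x : ℂ, w x = x * φ x := by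
    intro x
    have h := sub_smul_dslope w 0 x
    simp only [sub_zero, hw0, smul_eq_mul] at h
    rw [← h]
  -- φ 0 = b
  have hgan : AnalyticOnNhd ℂ g (ball 0 1) := hgd.analyticOnNhd isOpen_ball
  have hg'0 : HasDerivAt g (deriv g 0) 0 := ((hgan 0 h0b).differentiableAt).hasDerivAt
  have hg''d : DifferentiableAt ℂ (deriv g) 0 := ((hgan.deriv) 0 h0b).differentiableAt
  have hdf : ∀ x ∈ ball (0:ℂ) 1, deriv f x = g x + x * deriv g x := by
    intro x hx
    have hgx : HasDerivAt g (deriv g x) x :=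
      (hgd.differentiableAt (isOpen_ball.mem_nhds hx)).hasDerivAt
    have hpr : HasDerivAt (fun y => y * g y) (1 * g x + x * deriv g x) x :=
      (hasDerivAt_id x).mul hgx
    have hfeq : f = fun y => y * g y := funext hfzg
    rw [hfeq, hpr.deriv]
    ring
  have hdg0 : deriv g 0 = 2 * b := by
    have hev : deriv f =ᶠ[nhds 0] fun x => g x + x * deriv g x :=
      Filter.eventuallyEq_of_mem hball hdf
    have h2 : HasDerivAt (fun x => g x + x * deriv g x)
        (deriv g 0 + (1 * deriv g 0 + 0 * deriv (deriv g) 0)) 0 :=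
      hg'0.add ((hasDerivAt_id 0).mul hg''d.hasDerivAt)
    have hiter : iteratedDeriv 2 f 0 = 2 * deriv g 0 := by
      rw [iteratedDeriv_succ, iteratedDeriv_one, hev.deriv_eq, h2.deriv]
      ring
    have h4 : iteratedDeriv 2 f 0 = 4 * b := by linear_combination 2 * hf2
    rw [h4] at hiter
    linear_combination -hiter / 2
  have hφ0 : φ 0 = b := by
    rw [hφdef, dslope_same]
    have hq : HasDerivAt (fun x : ℂ => 1 - x^2) (-(2*(0:ℂ)^1)) 0 :=
      ((hasDerivAt_pow 2 (0:ℂ))).const_sub 1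
    have hP0 : HasDerivAt (fun x => g x * (1 - x^2))
        (deriv g 0 * (1 - (0:ℂ)^2) + g 0 * (-(2*(0:ℂ)^1))) 0 := hg'0.mul hq
    have hP0' : HasDerivAt (fun x => g x * (1 - x^2)) (2*b) 0 := by
      convert hP0 using 1
      rw [hdg0, hg0]
      ring
    have hw' : HasDerivAt w
        ((2*b * (g 0 * (1 - (0:ℂ)^2) + 1) - (g 0 * (1 - (0:ℂ)^2) - 1) * (2*b))
          / (g 0 * (1 - (0:ℂ)^2) + 1)^2) 0 :=
      (hP0'.sub_const 1).div (hP0'.add_const 1) (hpden 0 h0b)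
    rw [hw'.deriv, hg0]
    norm_num
    ring
  -- pointwise identity for g
  have h1mxφ : ∀ x ∈ ball (0:ℂ) 1, (1:ℂ) - x * φ x ≠ 0 := by
    intro x hx
    apply one_sub_ne
    rw [map_mul]
    calc Complex.abs x * Complex.abs (φ x) ≤ Complex.abs x * 1 :=
          mul_le_mul_of_nonneg_left (hφle x hx) (Complex.abs.nonneg x)
      _ < 1 := by simpa using habsmem x hx
  have hgx : ∀ x ∈ ball (0:ℂ) 1, g x = (1 + x * φ x) / ((1 - x * φ x) * (1 - x^2)) := by
    intro x hx
    have hdne := hpden x hx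
    have h1 : w x * (g x * (1 - x^2) + 1) = g x * (1 - x^2) - 1 := by
      rw [hwdef]
      field_simp
    rw [hwxφ x] at h1
    rw [eq_div_iff (mul_ne_zero (h1mxφ x hx) (hsq_ne x hx))]
    linear_combination -h1
  -- now fix the point z
  intro z hz hz0
  have hzr : Complex.abs z < 1 := habsmem z hz
  have hr0 : 0 < Complex.abs z := Complex.abs.pos hz0
  set u := φ z with hu
  set u' := deriv φ z with hu'
  have htle : Complex.abs u ≤ 1 := hφle z hz
  have ht0 : 0 ≤ Complex.abs u := Complex.abs.nonneg u
  have hU0 : 0 ≤ Complex.abs u' := Complex.abs.nonneg u'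
  have hSPa := SP_val hφd hφle hz
  rw [hφ0] at hSPa
  have hSPb := SP_deriv hφd hφle hz
  -- nonvanishing at z
  have hzu_lt : Complex.abs (z * u) < 1 := by
    rw [map_mul]
    calc Complex.abs z * Complex.abs u ≤ Complex.abs z * 1 :=
          mul_le_mul_of_nonneg_left htle (Complex.abs.nonneg z)
      _ < 1 := by simpa using hzr
  have h1mzu : (1:ℂ) - z*u ≠ 0 := one_sub_ne hzu_lt
  have h1pzu : (1:ℂ) + z*u ≠ 0 := by
    have := one_sub_ne (c := -(z*u)) (by simpa using hzu_lt)
    simpa [sub_neg_eq_add] using this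
  have h1zz : (1:ℂ) - z^2 ≠ 0 := hsq_ne z hz
  have hz2u2 : (1:ℂ) - z^2*u^2 ≠ 0 := by
    have he : (1:ℂ) - z^2*u^2 = (1 - z*u)*(1 + z*u) := by ring
    rw [he]
    exact mul_ne_zero h1mzu h1pzu
  have hgz : g z = (1 + z*u)/((1 - z*u)*(1 - z^2)) := hgx z hz
  -- derivative of g at z
  have hφz' : HasDerivAt φ u' z := (hφd.differentiableAt (isOpen_ball.mem_nhds hz)).hasDerivAt
  have hN : HasDerivAt (fun x => (1:ℂ) + x*φ x) (1*u + z*u') z :=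
    ((hasDerivAt_id z).mul hφz').const_add 1
  have hD1 : HasDerivAt (fun x => (1:ℂ) - x*φ x) (-(1*u + z*u')) z :=
    ((hasDerivAt_id z).mul hφz').const_sub 1
  have hD2 : HasDerivAt (fun x : ℂ => (1:ℂ) - x^2) (-(2*z^1)) z := (hasDerivAt_pow 2 z).const_sub 1
  have hD : HasDerivAt (fun x => ((1:ℂ) - x*φ x)*(1 - x^2))
      ((-(1*u + z*u'))*(1 - z^2) + (1 - z*u)*(-(2*z^1))) z := hD1.mul hD2
  have hDz_ne : ((1:ℂ) - z*u)*(1 - z^2) ≠ 0 := mul_ne_zero h1mzu h1zz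
  have hgev : g =ᶠ[nhds z] fun x => (1 + x*φ x)/((1 - x*φ x)*(1 - x^2)) :=
    Filter.eventuallyEq_of_mem (isOpen_ball.mem_nhds hz) hgx
  have hdg : deriv g z = ((1*u + z*u') * ((1 - z*u)*(1 - z^2))
      - (1 + z*u) * ((-(1*u + z*u'))*(1 - z^2) + (1 - z*u)*(-(2*z^1))))
      / (((1 - z*u)*(1 - z^2))^2) := by
    rw [hgev.deriv_eq]
    exact (hN.div hD hDz_ne).deriv
  have hdfz : deriv f z = g z + z * deriv g z := hdf z hz
  have hfz : f z = z * g z := hfzg z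
  -- cast facts
  set r := Complex.abs z with hrdef
  have hr4 : (0:ℝ) < 1 - r^4 := by
    have := pow_lt_one₀ (le_of_lt hr0) hzr (by norm_num : (4:ℕ) ≠ 0)
    linarith
  have hr4c : ((1 - r^4 : ℝ) : ℂ) ≠ 0 := by
    rw [Ne, Complex.ofReal_eq_zero]
    exact ne_of_gt hr4
  have hCcast : (((1 + r^4)/(1 - r^4) : ℝ) : ℂ) = (1 + (r:ℂ)^4)/((1 - r^4 : ℝ):ℂ) := by
    push_cast
    ring
  -- the key identity
  have hgz_ne : g z ≠ 0 := by
    rw [hgz]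
    exact div_ne_zero h1pzu hDz_ne
  have hk1 : z * deriv f z / f z
      = (1 + z^2)/(1 - z^2) + 2*z*(u + z*u') / (1 - z^2*u^2) := by
    rw [hdfz, hdg, hgz, hfz, hgz]
    field_simp
    ring
  have hcast1 : ((1 - r^4 : ℝ):ℂ) = 1 - (r:ℂ)^4 := by push_cast; ring
  have hcast2 : ((r^4 : ℝ):ℂ) = (r:ℂ)^4 := by push_cast; ring
  have hr4c' : (1:ℂ) - (r:ℂ)^4 ≠ 0 := by rw [← hcast1]; exact hr4c
  have hk2 : (1 + z^2)/(1 - z^2) - (((1 + r^4)/(1 - r^4) : ℝ) : ℂ)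
      = 2*(z^2 - ((r^4:ℝ):ℂ)) / ((1 - z^2) * ((1 - r^4 : ℝ):ℂ)) := by
    rw [hCcast, hcast1, hcast2]
    field_simp
    ring
  have hkey : z * deriv f z / f z - (((1 + r^4)/(1 - r^4) : ℝ) : ℂ)
      = 2*(z^2 - ((r^4:ℝ):ℂ)) / ((1 - z^2) * ((1 - r^4 : ℝ):ℂ))
        + 2*z*(u + z*u') / (1 - z^2*u^2) := by
    rw [hk1]
    linear_combination hk2
  rw [hkey]
  have htri := Complex.abs.add_le (2*(z^2 - ((r^4:ℝ):ℂ)) / ((1 - z^2) * ((1 - r^4 : ℝ):ℂ)))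
    (2*z*(u + z*u') / (1 - z^2*u^2))
  -- |E1| = 2r²/(1-r⁴)
  have hAne : 0 < Complex.abs (1 - z^2) := Complex.abs.pos h1zz
  have hE1 : Complex.abs (2*(z^2 - ((r^4:ℝ):ℂ)) / ((1 - z^2) * ((1 - r^4 : ℝ):ℂ)))
      = 2*r^2/(1 - r^4) := by
    rw [map_div₀, map_mul, map_mul, Complex.abs_two, Complex.abs_ofReal, abs_of_pos hr4,
      abs_quad z]
    rw [div_eq_div_iff (by positivity) (by positivity)]
    ring
  -- |E2| bound
  have hrt : (0:ℝ) < 1 - r^2*(Complex.abs u)^2 := by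
    have h1 : r^2*(Complex.abs u)^2 ≤ r^2*1 :=
      mul_le_mul_of_nonneg_left (by nlinarith : (Complex.abs u)^2 ≤ 1) (by positivity)
    nlinarith
  have hE2 : Complex.abs (2*z*(u + z*u') / (1 - z^2*u^2))
      ≤ 2*r*(Complex.abs u + r*Complex.abs u')/(1 - r^2*(Complex.abs u)^2) := by
    rw [map_div₀]
    apply div_le_div₀ (by positivity)
    · rw [map_mul, map_mul, Complex.abs_two]
      have h1 : Complex.abs (u + z*u') ≤ Complex.abs u + r*Complex.abs u' := by
        calc Complex.abs (u + z*u') ≤ Complex.abs u + Complex.abs (z*u') :=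
              Complex.abs.add_le _ _
          _ = Complex.abs u + r*Complex.abs u' := by rw [map_mul]
      calc 2 * Complex.abs z * Complex.abs (u + z*u')
          ≤ 2 * Complex.abs z * (Complex.abs u + r*Complex.abs u') := by
            apply mul_le_mul_of_nonneg_left h1 (by positivity)
        _ = 2*r*(Complex.abs u + r*Complex.abs u') := by rw [hrdef]
    · exact hrt
    · have h2 : Complex.abs ((1:ℂ)) - Complex.abs (z^2*u^2) ≤ Complex.abs (1 - z^2*u^2) := by
        have h4 := Complex.abs.abs_abv_sub_le_abv_sub 1 (z^2*u^2)
        have h5 := le_abs_self (Complex.abs (1:ℂ) - Complex.abs (z^2*u^2))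
        linarith
      have h3 : Complex.abs (z^2*u^2) = r^2*(Complex.abs u)^2 := by
        rw [map_mul, map_pow, map_pow, hrdef]
      rw [h3] at h2
      simpa using h2
  -- final real computation
  have hβ0 : 0 ≤ Complex.abs b := Complex.abs.nonneg b
  have hreal := real_bound r (Complex.abs b) (Complex.abs u) (Complex.abs u')
    (Complex.abs.nonneg z) hzr hβ0 hb ht0 htle hU0
    (by linarith [hSPa]) (by linarith [hSPb])
  rw [hn]
  calc Complex.abs (2*(z^2 - ((r^4:ℝ):ℂ)) / ((1 - z^2) * ((1 - r^4 : ℝ):ℂ))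
        + 2*z*(u + z*u') / (1 - z^2*u^2))
      ≤ 2*r^2/(1 - r^4) + 2*r*(Complex.abs u + r*Complex.abs u')/(1 - r^2*(Complex.abs u)^2) := by
        rw [← hE1]
        exact le_trans htri (by linarith [hE2])
    _ ≤ (2*(Complex.abs b)*r + 6*r^2 + 4*(2*(Complex.abs b))*r^3 + 6*r^4
          + 2*(Complex.abs b)*r^5)/((1 + 2*(Complex.abs b)*r + r^2)*(1 - r^4)) := hreal
    _ = (2 * Complex.abs b * r + 6 * r ^ 2 + 4 * (2 * Complex.abs b) * r ^ 3 +
          6 * r ^ 4 + 2 * Complex.abs b * r ^ 5) /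
          ((1 + 2 * Complex.abs b * r + r ^ 2) * (1 - r ^ 4)) := by ring_nf
end

section
/- Let b, c ∈ ℂ with |b| ≤ 1, |c| ≤ 1, set m = |4b − 2c| and n = |2c|, and assume m ≤ 2. Let ρ₁ be the smallest root in (0,1) of the equation 1 − (m+n) r − 3(6 + m n) r² − 17(m+n) r³ − 12(3 + m n) r⁴ − 15(m+n) r⁵ − (14 + m n) r⁶ + (m+n) r⁷ + 3 r⁸ = 0 (such a root exists). Then for every f ∈ K²_{b,c} and every z ∈ ℂ with 0 < |z| < ρ₁, one has Re(z·f'(z)/f(z)) > |z·f'(z)/f(z) − 1|. (That is, ρ₁ is the radius of parabolic starlikeness for the class K²_{b,c}.) -/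
open Complex Real Metric Set

lemma mob_id (a w : ℂ) : ‖1 - (starRingEnd ℂ a) * w‖^2 - ‖w - a‖^2
    = (1 - ‖a‖^2) * (1 - ‖w‖^2) := by
  rw [Complex.sq_norm, Complex.sq_norm, Complex.sq_norm, Complex.sq_norm]
  simp only [Complex.normSq_apply, Complex.sub_re, Complex.sub_im, Complex.mul_re, Complex.mul_im,
    Complex.conj_re, Complex.conj_im, Complex.one_re, Complex.one_im]
  ring

lemma mob_ne (a w : ℂ) (ha : ‖a‖ < 1) (hw : ‖w‖ < 1) :
    1 - (starRingEnd ℂ a) * w ≠ 0 := by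
  intro h
  have : ‖(starRingEnd ℂ a) * w‖ < 1 := by
    rw [norm_mul, Complex.norm_conj]; nlinarith [norm_nonneg a, norm_nonneg w]
  have h1 : (1 : ℂ) = (starRingEnd ℂ a) * w := by linear_combination h
  rw [← h1] at this; simp at this

lemma mob_lt (a w : ℂ) (ha : ‖a‖ < 1) (hw : ‖w‖ < 1) :
    ‖(w - a)/(1 - (starRingEnd ℂ a) * w)‖ < 1 := by
  have hne := mob_ne a w ha hw
  have hd : 0 < ‖1 - (starRingEnd ℂ a) * w‖ := norm_pos_iff.mpr hne
  rw [norm_div, div_lt_one hd]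
  have h := mob_id a w
  have hpos : 0 < (1 - ‖a‖^2) * (1 - ‖w‖^2) := by
    apply mul_pos <;> nlinarith [norm_nonneg a, norm_nonneg w]
  have : ‖w - a‖^2 < ‖1 - (starRingEnd ℂ a) * w‖^2 := by linarith
  exact lt_of_pow_lt_pow_left₀ 2 hd.le this

lemma sp_two (φ : ℂ → ℂ) (hd : DifferentiableOn ℂ φ (ball 0 1))
    (hb : ∀ w ∈ ball (0:ℂ) 1, ‖φ w‖ < 1) (z : ℂ) (hz : z ∈ ball (0:ℂ) 1) :
    ‖φ z - φ 0‖ ≤ ‖z‖ * ‖1 - (starRingEnd ℂ) (φ 0) * φ z‖ := by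
  have h0 : (0:ℂ) ∈ ball (0:ℂ) 1 := by simp
  set a := φ 0 with ha
  have haa : ‖a‖ < 1 := hb 0 h0
  set η : ℂ → ℂ := fun w => (φ w - a)/(1 - (starRingEnd ℂ) a * φ w) with hη
  have hdη : DifferentiableOn ℂ η (ball 0 1) := by
    apply DifferentiableOn.div
    · exact hd.sub (differentiableOn_const a)
    · exact (differentiableOn_const _).sub ((differentiableOn_const _).mul hd)
    · intro w hw; exact mob_ne a (φ w) haa (hb w hw)
  have hmaps : MapsTo η (ball (0:ℂ) 1) (ball (0:ℂ) 1) := by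
    intro w hw
    simp only [mem_ball, dist_zero_right] at *
    exact mob_lt a (φ w) haa (hb w (by simpa using hw))
  have hη0 : η 0 = 0 := by simp [hη, ha]
  have hzlt : ‖z‖ < 1 := by simpa [mem_ball, dist_zero_right] using hz
  have := Complex.norm_le_norm_of_mapsTo_ball hdη (hmaps.mono_right ball_subset_closedBall) hη0 hzlt
  have hne : 1 - (starRingEnd ℂ) a * φ z ≠ 0 := mob_ne a (φ z) haa (hb z hz)
  have heq : φ z - a = η z * (1 - (starRingEnd ℂ) a * φ z) := by
    rw [hη]; simp only; rw [div_mul_cancel₀ _ hne]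
  rw [heq, norm_mul]
  exact mul_le_mul_of_nonneg_right this (norm_nonneg _)

-- derivative Schwarz-Pick, strict case
lemma sp_der (φ : ℂ → ℂ) (hd : DifferentiableOn ℂ φ (ball 0 1))
    (hb : ∀ w ∈ ball (0:ℂ) 1, ‖φ w‖ < 1) (z : ℂ) (hz : z ∈ ball (0:ℂ) 1) :
    ‖deriv φ z‖ * (1 - ‖z‖^2) ≤ 1 - ‖φ z‖^2 := by
  have hzlt : ‖z‖ < 1 := by simpa [mem_ball, dist_zero_right] using hz
  set a := φ z with ha
  have haa : ‖a‖ < 1 := hb z hz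
  set μ : ℂ → ℂ := fun w => (w - (-z))/(1 - (starRingEnd ℂ) (-z) * w) with hμ
  set ψ : ℂ → ℂ := fun u => (u - a)/(1 - (starRingEnd ℂ) a * u) with hψ
  have hmapsμ : MapsTo μ (ball (0:ℂ) 1) (ball (0:ℂ) 1) := by
    intro w hw
    simp only [mem_ball, dist_zero_right] at *
    exact mob_lt (-z) w (by simpa using hzlt) hw
  have hdμ : DifferentiableOn ℂ μ (ball 0 1) := by
    apply DifferentiableOn.div
    · exact differentiableOn_id.sub (differentiableOn_const _)
    · exact (differentiableOn_const _).sub ((differentiableOn_const _).mul differentiableOn_id)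
    · intro w hw; exact mob_ne (-z) w (by simpa using hzlt)
        (by simpa [mem_ball, dist_zero_right] using hw)
  have hmapsφ : MapsTo φ (ball (0:ℂ) 1) (ball (0:ℂ) 1) := by
    intro w hw; simpa [mem_ball, dist_zero_right] using hb w hw
  have hmapsψ : MapsTo ψ (ball (0:ℂ) 1) (ball (0:ℂ) 1) := by
    intro w hw
    simp only [mem_ball, dist_zero_right] at *
    exact mob_lt a w haa hw
  have hdψ : DifferentiableOn ℂ ψ (ball 0 1) := by
    apply DifferentiableOn.div
    · exact differentiableOn_id.sub (differentiableOn_const _)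
    · exact (differentiableOn_const _).sub ((differentiableOn_const _).mul differentiableOn_id)
    · intro w hw; exact mob_ne a w haa (by simpa [mem_ball, dist_zero_right] using hw)
  set η : ℂ → ℂ := ψ ∘ (φ ∘ μ) with hηdef
  have hdη : DifferentiableOn ℂ η (ball 0 1) :=
    (hdψ.comp (hd.comp hdμ hmapsμ) (hmapsφ.comp hmapsμ))
  have hmapsη : MapsTo η (ball (0:ℂ) 1) (ball (0:ℂ) 1) :=
    hmapsψ.comp (hmapsφ.comp hmapsμ)
  have hμ0 : μ 0 = z := by simp [hμ]
  have hη0 : η 0 = 0 := by simp [hηdef, hψ, Function.comp, hμ0, ha]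
  -- derivatives
  have hzz : (1:ℂ) - (starRingEnd ℂ) (-z) * 0 ≠ 0 := by simp
  have hμder : HasDerivAt μ (1 - (starRingEnd ℂ) z * z) 0 := by
    have h1 : HasDerivAt (fun w : ℂ => w - (-z)) 1 0 := (hasDerivAt_id 0).sub_const _
    have h2 : HasDerivAt (fun w : ℂ => 1 - (starRingEnd ℂ) (-z) * w) (-(starRingEnd ℂ) (-z)) 0 := by
      simpa using ((hasDerivAt_id (0:ℂ)).const_mul ((starRingEnd ℂ) (-z))).const_sub 1
    have := h1.fun_div h2 (by simpa using hzz)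
    refine this.congr_deriv ?_
    simp
    ring
  have hφder : HasDerivAt φ (deriv φ z) z :=
    (hd.differentiableAt (isOpen_ball.mem_nhds hz)).hasDerivAt
  have hψne : 1 - (starRingEnd ℂ) a * a ≠ 0 := mob_ne a a haa haa
  have hψder : HasDerivAt ψ ((1 - (starRingEnd ℂ) a * a)/(1 - (starRingEnd ℂ) a * a)^2) a := by
    have h1 : HasDerivAt (fun u : ℂ => u - a) 1 a := (hasDerivAt_id a).sub_const _
    have h2 : HasDerivAt (fun u : ℂ => 1 - (starRingEnd ℂ) a * u) (-(starRingEnd ℂ) a) a := by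
      simpa using ((hasDerivAt_id (a:ℂ)).const_mul ((starRingEnd ℂ) a)).const_sub 1
    have := h1.fun_div h2 hψne
    refine this.congr_deriv ?_
    simp only [sub_self, zero_mul, sub_zero, one_mul]
  have hφμ : HasDerivAt (φ ∘ μ) (deriv φ z * (1 - (starRingEnd ℂ) z * z)) 0 := by
    apply HasDerivAt.comp
    · rw [hμ0]; exact hφder
    · exact hμder
  have hηder : HasDerivAt η ((1 - (starRingEnd ℂ) a * a)/(1 - (starRingEnd ℂ) a * a)^2 *
      (deriv φ z * (1 - (starRingEnd ℂ) z * z))) 0 := by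
    apply HasDerivAt.comp
    · show HasDerivAt ψ _ ((φ ∘ μ) 0); rw [Function.comp_apply, hμ0]; exact hψder
    · exact hφμ
  have hbound := Complex.norm_deriv_le_one_of_mapsTo_ball hdη (by rw [hη0]; exact hmapsη.mono_right ball_subset_closedBall) one_pos
  rw [hηder.deriv] at hbound
  -- now compute absolute values
  have hca : (starRingEnd ℂ) a * a = ((‖a‖^2 : ℝ) : ℂ) := by
    rw [Complex.sq_norm]; exact (Complex.normSq_eq_conj_mul_self ).symm
  have hcz : (starRingEnd ℂ) z * z = ((‖z‖^2 : ℝ) : ℂ) := by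
    rw [Complex.sq_norm]; exact (Complex.normSq_eq_conj_mul_self ).symm
  have habs1 : ‖1 - (starRingEnd ℂ) a * a‖ = 1 - ‖a‖^2 := by
    rw [hca, ← Complex.ofReal_one, ← Complex.ofReal_sub, Complex.norm_real, Real.norm_eq_abs]
    rw [_root_.abs_of_nonneg]; nlinarith [norm_nonneg a]
  have habs2 : ‖1 - (starRingEnd ℂ) z * z‖ = 1 - ‖z‖^2 := by
    rw [hcz, ← Complex.ofReal_one, ← Complex.ofReal_sub, Complex.norm_real, Real.norm_eq_abs]
    rw [_root_.abs_of_nonneg]; nlinarith [norm_nonneg z]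
  rw [norm_mul, norm_mul, norm_div, norm_pow, habs1, habs2] at hbound
  have ha1 : 0 < 1 - ‖a‖^2 := by nlinarith [norm_nonneg a]
  have : (1 - ‖a‖^2)/(1 - ‖a‖^2)^2 = 1/(1 - ‖a‖^2) := by
    field_simp
  rw [this] at hbound
  rw [div_mul_eq_mul_div, div_le_one ha1, one_mul] at hbound
  linarith [hbound]

lemma sp_pack (φ : ℂ → ℂ) (hd : DifferentiableOn ℂ φ (ball 0 1))
    (hb : ∀ w ∈ ball (0:ℂ) 1, ‖φ w‖ ≤ 1) (z : ℂ) (hz : z ∈ ball (0:ℂ) 1) :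
    ‖φ z - φ 0‖ ≤ ‖z‖ * ‖1 - (starRingEnd ℂ) (φ 0) * φ z‖
    ∧ ‖deriv φ z‖ * (1 - ‖z‖^2) ≤ 1 - ‖φ z‖^2 := by
  by_cases hstrict : ∀ w ∈ ball (0:ℂ) 1, ‖φ w‖ < 1
  · exact ⟨sp_two φ hd hstrict z hz, sp_der φ hd hstrict z hz⟩
  · push_neg at hstrict
    obtain ⟨w₀, hw₀, hw₀1⟩ := hstrict
    have hmax : IsMaxOn (norm ∘ φ) (ball (0:ℂ) 1) w₀ := by
      intro w hw
      simp only [Function.comp_apply]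
      exact le_trans (hb w hw) hw₀1
    have hconst : EqOn φ (Function.const ℂ (φ w₀)) (ball (0:ℂ) 1) :=
      Complex.eqOn_of_isPreconnected_of_isMaxOn_norm (convex_ball _ _).isPreconnected
        isOpen_ball hd hw₀ hmax
    have h0 : (0:ℂ) ∈ ball (0:ℂ) 1 := by simp
    have hφz : φ z = φ w₀ := hconst hz
    have hφ0 : φ 0 = φ w₀ := hconst h0
    constructor
    · rw [hφz, hφ0, sub_self, norm_zero]
      positivity
    · have : deriv φ z = 0 := by
        have hev : φ =ᶠ[nhds z] Function.const ℂ (φ w₀) :=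
          Filter.eventuallyEq_of_mem (isOpen_ball.mem_nhds hz) hconst
        rw [hev.deriv_eq]; exact deriv_const z _
      rw [this, norm_zero, zero_mul]
      have := hb z hz
      nlinarith [norm_nonneg (φ z)]

set_option maxHeartbeats 2000000 in
lemma carat (p : ℂ → ℂ) (hp : DifferentiableOn ℂ p (ball 0 1)) (hp0 : p 0 = 1)
    (hre : ∀ w ∈ ball (0:ℂ) 1, 0 < (p w).re) (α : ℝ) (hα : ‖deriv p 0‖ = 2*α)
    (hα1 : α ≤ 1) (z : ℂ) (hz : z ∈ ball (0:ℂ) 1) :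
    ‖z * deriv p z / p z‖ * ((1 - ‖z‖^2) * (1 + 2*α*‖z‖ + ‖z‖^2))
      ≤ 2*‖z‖*(α*(1+‖z‖^2)+2*‖z‖) := by
  have h0mem : (0:ℂ) ∈ ball (0:ℂ) 1 := by simp
  have hα0 : 0 ≤ α := by nlinarith [norm_nonneg (deriv p 0)]
  have hp1 : ∀ w ∈ ball (0:ℂ) 1, p w + 1 ≠ 0 := by
    intro w hw h
    have : (p w + 1).re = 0 := by rw [h]; simp
    rw [Complex.add_re, Complex.one_re] at this
    have := hre w hw; linarith
  set ω : ℂ → ℂ := fun w => (p w - 1)/(p w + 1) with hωdef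
  have hωlt : ∀ w ∈ ball (0:ℂ) 1, ‖ω w‖ < 1 := by
    intro w hw
    have hne := hp1 w hw
    have hd1 : 0 < ‖p w + 1‖ := norm_pos_iff.mpr hne
    rw [hωdef]; simp only
    rw [norm_div, div_lt_one hd1]
    have key : ‖p w + 1‖^2 - ‖p w - 1‖^2 = 4*(p w).re := by
      rw [Complex.sq_norm, Complex.sq_norm]
      simp only [Complex.normSq_apply, Complex.add_re, Complex.add_im, Complex.sub_re,
        Complex.sub_im, Complex.one_re, Complex.one_im]
      ring
    have := hre w hw
    nlinarith [norm_nonneg (p w - 1), norm_nonneg (p w + 1)]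
  have hdω : DifferentiableOn ℂ ω (ball 0 1) :=
    (hp.sub (differentiableOn_const 1)).div (hp.add (differentiableOn_const 1)) hp1
  have hω0 : ω 0 = 0 := by rw [hωdef]; simp [hp0]
  set φ : ℂ → ℂ := dslope ω 0 with hφdef
  have hdφ : DifferentiableOn ℂ φ (ball 0 1) :=
    (differentiableOn_dslope (ball_mem_nhds 0 one_pos)).mpr hdω
  have hωφ : ∀ w, ω w = w * φ w := by
    intro w
    rcases eq_or_ne w 0 with rfl | hw
    · simp [hω0]
    · rw [hφdef, dslope_of_ne ω hw, slope_def_field, hω0]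
      field_simp
      ring
  have hmaps : MapsTo ω (ball (0:ℂ) 1) (ball (ω 0) 1) := by
    intro w hw
    rw [hω0, mem_ball, dist_zero_right]
    exact hωlt w hw
  have hφb : ∀ w ∈ ball (0:ℂ) 1, ‖φ w‖ ≤ 1 := by
    intro w hw
    have := Complex.norm_dslope_le_div_of_mapsTo_ball hdω (hmaps.mono_right ball_subset_closedBall) hw
    simpa using this
  -- φ 0 = deriv ω 0 = deriv p 0 / 2
  have hφ0 : φ 0 = deriv p 0 / 2 := by
    rw [hφdef, dslope_same]
    have hpd : HasDerivAt p (deriv p 0) 0 := (hp.differentiableAt (isOpen_ball.mem_nhds h0mem)).hasDerivAt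
    have h1 : HasDerivAt (fun w => p w - 1) (deriv p 0) 0 := hpd.sub_const 1
    have h2 : HasDerivAt (fun w => p w + 1) (deriv p 0) 0 := hpd.add_const 1
    have := h1.fun_div h2 (hp1 0 h0mem)
    rw [this.deriv]
    rw [hp0]
    have : (1:ℂ) + 1 ≠ 0 := by norm_num
    field_simp
    ring
  have hφ0a : ‖φ 0‖ = α := by
    rw [hφ0, norm_div, hα, Complex.norm_two]; ring
  -- quantities
  set r := ‖z‖ with hr
  set t := ‖φ z‖ with ht
  have hr1 : r < 1 := by simpa [mem_ball, dist_zero_right] using hz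
  have hr0 : 0 ≤ r := norm_nonneg z
  have ht1 : t ≤ 1 := hφb z hz
  have ht0 : 0 ≤ t := norm_nonneg (φ z)
  obtain ⟨K1, K2⟩ := sp_pack φ hdφ hφb z hz
  -- quadratic bound : t*(1+α*r) ≤ α + r
  have hquad : t*(1+α*r) ≤ α + r := by
    have hsq : ‖φ z - φ 0‖^2 ≤ r^2 * ‖1 - (starRingEnd ℂ) (φ 0) * φ z‖^2 := by
      rw [← mul_pow]; exact pow_le_pow_left₀ (norm_nonneg _) K1 2
    set x := (φ z * (starRingEnd ℂ) (φ 0)).re with hx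
    have e1 : ‖φ z - φ 0‖^2 = t^2 + α^2 - 2*x := by
      rw [Complex.sq_norm, ← hφ0a, Complex.sq_norm, Complex.sq_norm]
      simp only [Complex.normSq_apply, Complex.sub_re, Complex.sub_im, Complex.mul_re,
        Complex.mul_im, Complex.conj_re, Complex.conj_im, hx]
      ring
    have e2 : ‖1 - (starRingEnd ℂ) (φ 0) * φ z‖^2 = 1 + α^2*t^2 - 2*x := by
      rw [Complex.sq_norm, ← hφ0a, Complex.sq_norm, Complex.sq_norm]
      simp only [Complex.normSq_apply, Complex.sub_re, Complex.sub_im, Complex.mul_re,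
        Complex.mul_im, Complex.conj_re, Complex.conj_im, Complex.one_re, Complex.one_im, hx]
      ring
    have hxb : |x| ≤ α * t := by
      calc |x| ≤ ‖φ z * (starRingEnd ℂ) (φ 0)‖ := Complex.abs_re_le_norm _
        _ = α * t := by rw [norm_mul, Complex.norm_conj, hφ0a, ← ht]; ring
    rw [e1, e2] at hsq
    have hxb1 : x ≤ α*t := le_of_abs_le hxb
    have hxb2 : -(α*t) ≤ x := neg_le_of_abs_le hxb
    -- (t(1+αr)-(α+r)) * (t(1-αr)+(r-α)) ≤ 0 ; rule out bad branch with αt ≤ 1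
    have h1r2 : (0:ℝ) ≤ 1 - r^2 := by nlinarith
    have hprod : (t*(1+α*r)-(α+r)) * (t*(1-α*r)+(r-α)) ≤ 0 := by
      nlinarith [mul_le_mul_of_nonneg_left hxb1 h1r2]
    have hαt : α*t ≤ 1 := by nlinarith [mul_le_mul hα1 ht1 ht0 zero_le_one]
    by_contra hcon
    push_neg at hcon
    have hf1 : 0 < t*(1+α*r) - (α+r) := by linarith
    have hf2 : t*(1-α*r)+(r-α) ≤ 0 := by
      by_contra h2
      push_neg at h2
      nlinarith [hprod]
    have hh : (0:ℝ) ≤ r * (1 - α*t) := mul_nonneg hr0 (by linarith)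
    nlinarith [hh, hf1, hf2]
  -- derivative identity
  have h1ω : 1 - ω z ≠ 0 := by
    intro h
    have h1 : ‖ω z‖ < 1 := hωlt z hz
    have : (1:ℂ) = ω z := by linear_combination h
    rw [← this] at h1; simp at h1
  have h2ω : 1 + ω z ≠ 0 := by
    intro h
    have h1 : ‖ω z‖ < 1 := hωlt z hz
    have : ω z = -1 := by linear_combination h
    rw [this] at h1; simp at h1
  have hpz : p z ≠ 0 := by
    intro h
    have := hre z hz; rw [h] at this; simp at this
  have hpω : ∀ w ∈ ball (0:ℂ) 1, p w = (1 + ω w)/(1 - ω w) := by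
    intro w hw
    have h1w : 1 - ω w ≠ 0 := by
      intro h
      have h1 : ‖ω w‖ < 1 := hωlt w hw
      have : (1:ℂ) = ω w := by linear_combination h
      rw [← this] at h1; simp at h1
    have hp1w := hp1 w hw
    have hω : ω w * (p w + 1) = p w - 1 := by
      rw [hωdef]; exact div_mul_cancel₀ _ hp1w
    rw [eq_div_iff h1w]
    linear_combination -hω
  have hφz : DifferentiableAt ℂ φ z := hdφ.differentiableAt (isOpen_ball.mem_nhds hz)
  have hωder : HasDerivAt ω (φ z + z * deriv φ z) z := by
    have : ω = fun w => w * φ w := funext hωφ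
    rw [this]
    have := ((hasDerivAt_id z).fun_mul hφz.hasDerivAt)
    refine this.congr_deriv ?_
    simp only [id_eq]
    ring
  have hpder : deriv p z = 2 * (φ z + z * deriv φ z) / (1 - ω z)^2 := by
    have hev : p =ᶠ[nhds z] fun w => (1 + ω w)/(1 - ω w) :=
      Filter.eventuallyEq_of_mem (isOpen_ball.mem_nhds hz) hpω
    rw [hev.deriv_eq]
    have h1 : HasDerivAt (fun w => 1 + ω w) (φ z + z * deriv φ z) z := hωder.const_add 1
    have h2 : HasDerivAt (fun w => 1 - ω w) (-(φ z + z * deriv φ z)) z := hωder.const_sub 1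
    rw [(h1.fun_div h2 h1ω).deriv]
    field_simp
    ring
  have hkey : z * deriv p z / p z = 2*z*(φ z + z * deriv φ z)/((1 - ω z)*(1 + ω z)) := by
    rw [hpder, hpω z hz]
    field_simp
  rw [hkey]
  -- abs estimates
  have hω2 : (1 - ω z)*(1 + ω z) = 1 - (z * φ z)^2 := by rw [← hωφ]; ring
  rw [hω2]
  have hDlow : 1 - r^2*t^2 ≤ ‖1 - (z*φ z)^2‖ := by
    have h := norm_sub_norm_le (1:ℂ) ((z*φ z)^2)
    simp only [norm_one] at h
    rw [norm_pow, norm_mul, ← hr, ← ht] at h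
    nlinarith [h]
  have hrt : r*t < 1 := by nlinarith
  have hDpos : 0 < ‖1 - (z*φ z)^2‖ := by
    nlinarith [hDlow, hrt, mul_nonneg hr0 ht0]
  set dφ := ‖deriv φ z‖ with hdφ2
  have hdφ0 : 0 ≤ dφ := norm_nonneg _
  have hN : ‖2*z*(φ z + z*deriv φ z)‖ ≤ 2*r*t + 2*r^2*dφ := by
    rw [norm_mul, norm_mul]
    have habs2 : ‖(2:ℂ)‖ = 2 := by norm_num [Complex.norm_two]
    rw [habs2, ← hr]
    have : ‖φ z + z*deriv φ z‖ ≤ t + r*dφ := by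
      calc ‖φ z + z*deriv φ z‖ ≤ ‖φ z‖ + ‖z*deriv φ z‖ :=
            norm_add_le _ _
        _ = t + r*dφ := by rw [norm_mul, ← hr, ← ht, ← hdφ2]
    nlinarith [this]
  rw [norm_div]
  rw [div_mul_eq_mul_div, div_le_iff₀ hDpos]
  have hRHS0 : 0 ≤ 2*r*(α*(1+r^2)+2*r) := by positivity
  have hstep : 2*r*(α*(1+r^2)+2*r) * (1 - r^2*t^2) ≤ 2*r*(α*(1+r^2)+2*r) * ‖1 - (z*φ z)^2‖ :=
    mul_le_mul_of_nonneg_left hDlow hRHS0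
  have hE0 : 0 ≤ (1 - r^2) * (1 + 2*α*r + r^2) := by
    apply mul_nonneg
    · nlinarith
    · nlinarith [mul_nonneg hα0 hr0, sq_nonneg r]
  have hmain : (2*r*t + 2*r^2*dφ) * ((1 - r^2) * (1 + 2*α*r + r^2)) ≤
      2*r*(α*(1+r^2)+2*r) * (1 - r^2*t^2) := by
    have hu : 0 ≤ α + r - t*(1+α*r) := by linarith
    have he : 0 ≤ (1 - t^2) - dφ*(1 - r^2) := by linarith [K2]
    have hP1 : 0 ≤ 2*r*(1-r*t)*(1-r^2)*(α + r - t*(1+α*r)) := by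
      apply mul_nonneg
      apply mul_nonneg
      apply mul_nonneg
      · linarith
      · linarith
      · nlinarith
      · exact hu
    have hP2 : 0 ≤ 2*r^2*(1+2*α*r+r^2)*((1 - t^2) - dφ*(1 - r^2)) := by
      apply mul_nonneg
      · nlinarith [mul_nonneg (mul_nonneg hα0 hr0) (sq_nonneg r), sq_nonneg r, sq_nonneg (r^2)]
      · exact he
    nlinarith [hP1, hP2, sq_nonneg r, sq_nonneg t]
  calc ‖2*z*(φ z + z*deriv φ z)‖ * ((1 - r^2) * (1 + 2*α*r + r^2))
      ≤ (2*r*t + 2*r^2*dφ) * ((1 - r^2) * (1 + 2*α*r + r^2)) :=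
        mul_le_mul_of_nonneg_right hN hE0
    _ ≤ 2*r*(α*(1+r^2)+2*r) * (1 - r^2*t^2) := hmain
    _ ≤ 2*r*(α*(1+r^2)+2*r) * ‖1 - (z*φ z)^2‖ := hstep

lemma dslope_fact (f : ℂ → ℂ) (hf0 : f 0 = 0) : ∀ w : ℂ, f w = w * dslope f 0 w := by
  intro w
  rcases eq_or_ne w 0 with rfl | hw
  · simp [hf0]
  · rw [dslope_of_ne _ hw, slope_def_field, hf0]
    field_simp
    ring

lemma snd_coeff (f : ℂ → ℂ) (hf : AnalyticOnNhd ℂ f (ball 0 1)) (hf0 : f 0 = 0) :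
    deriv (dslope f 0) 0 = iteratedDeriv 2 f 0 / 2 := by
  have h0 : (0:ℂ) ∈ ball (0:ℂ) 1 := by simp
  set F := dslope f 0 with hFdef
  have hFd : DifferentiableOn ℂ F (ball 0 1) :=
    (differentiableOn_dslope (ball_mem_nhds _ one_pos)).mpr (fun w hw => (hf w hw).differentiableWithinAt)
  have hFan : AnalyticOnNhd ℂ F (ball 0 1) := hFd.analyticOnNhd isOpen_ball
  have hFat : DifferentiableAt ℂ F 0 := hFd.differentiableAt (isOpen_ball.mem_nhds h0)
  have hF'at : DifferentiableAt ℂ (deriv F) 0 :=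
    ((hFan.deriv) 0 h0).differentiableAt
  have hdf : ∀ w ∈ ball (0:ℂ) 1, deriv f w = F w + w * deriv F w := by
    intro w hw
    have hfe : f = fun u => u * F u := funext (dslope_fact f hf0)
    have hFw : DifferentiableAt ℂ F w := hFd.differentiableAt (isOpen_ball.mem_nhds hw)
    have hder := (hasDerivAt_id w).fun_mul hFw.hasDerivAt
    simp only [id_eq] at hder
    rw [hfe, hder.deriv]
    ring
  have hev : deriv f =ᶠ[nhds 0] fun w => F w + w * deriv F w :=
    Filter.eventuallyEq_of_mem (isOpen_ball.mem_nhds h0) hdf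
  have h2 : iteratedDeriv 2 f 0 = deriv (deriv f) 0 := by
    rw [iteratedDeriv_succ, iteratedDeriv_one]
  rw [h2, hev.deriv_eq]
  have hD := hFat.hasDerivAt.fun_add ((hasDerivAt_id 0).fun_mul hF'at.hasDerivAt)
  simp only [id_eq] at hD
  rw [hD.deriv]
  ring

lemma ident_poly (m n r : ℝ) (h1 : (0:ℝ) < 1+r^2) (h2 : (0:ℝ) < 1-r^2)
    (h3 : (0:ℝ) < 1+m*r+r^2) (h4 : (0:ℝ) < 1+n*r+r^2) :
    (1 - 3*r^2)/(1+r^2) - 2*(2*r*((m/2)*(1+r^2)+2*r) / ((1 - r^2) * (1 + 2*(m/2)*r + r^2)))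
      - 2*(2*r*((n/2)*(1+r^2)+2*r) / ((1 - r^2) * (1 + 2*(n/2)*r + r^2)))
    = (1 - (m + n)*r - 3*(6 + m*n)*r^2 - 17*(m + n)*r^3 - 12*(3 + m*n)*r^4 - 15*(m + n)*r^5
        - (14 + m*n)*r^6 + (m + n)*r^7 + 3*r^8)
      / ((1+r^2) * ((1 - r^2) * ((1 + m*r + r^2) * (1 + n*r + r^2)))) := by
  have e3 : (1 + 2*(m/2)*r + r^2) = 1 + m*r + r^2 := by ring
  have e4 : (1 + 2*(n/2)*r + r^2) = 1 + n*r + r^2 := by ring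
  rw [e3, e4]
  have h3' : 1 + r*m + r^2 ≠ 0 := by nlinarith
  have h4' : 1 + r*n + r^2 ≠ 0 := by nlinarith
  have := h1.ne'
  have := h2.ne'
  have := h3.ne'
  have := h4.ne'
  field_simp
  ring

set_option maxHeartbeats 2000000 in
theorem stmt_7 (b c : ℂ) (hb : ‖b‖ ≤ 1) (hc : ‖c‖ ≤ 1)
    (m : ℝ) (hm : m = ‖4 * b - 2 * c‖)
    (n : ℝ) (hn : n = ‖2 * c‖)
    (hm2 : m ≤ 2)
    (f : ℂ → ℂ) (hf : AnalyticOnNhd ℂ f (Metric.ball (0:ℂ) 1))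
    (hf0 : f 0 = 0) (hf1 : deriv f 0 = 1)
    (hf2 : iteratedDeriv 2 f 0 / 2 = 4 * b)
    (hg : ∃ g : ℂ → ℂ, AnalyticOnNhd ℂ g (Metric.ball (0:ℂ) 1) ∧
      g 0 = 0 ∧ deriv g 0 = 1 ∧ iteratedDeriv 2 g 0 / 2 = 2 * c ∧
      ∀ z ∈ Metric.ball (0:ℂ) 1, z ≠ 0 →
        0 < (f z / g z).re ∧ 0 < (g z * (1 - z ^ 2) / z).re)
    (ρ : ℝ) (hρ : ρ ∈ Set.Ioo (0:ℝ) 1)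
    (hroot : 1 - (m + n)*ρ - 3*(6 + m*n)*ρ^2 - 17*(m + n)*ρ^3 - 12*(3 + m*n)*ρ^4 - 15*(m + n)*ρ^5 - (14 + m*n)*ρ^6 + (m + n)*ρ^7 + 3*ρ^8 = 0)
    (hsmall : ∀ r ∈ Set.Ioo (0:ℝ) 1, 1 - (m + n)*r - 3*(6 + m*n)*r^2 - 17*(m + n)*r^3 - 12*(3 + m*n)*r^4 - 15*(m + n)*r^5 - (14 + m*n)*r^6 + (m + n)*r^7 + 3*r^8 = 0 → ρ ≤ r) :
    ∀ z : ℂ, 0 < ‖z‖ → ‖z‖ < ρ →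
      (z * deriv f z / f z).re > ‖z * deriv f z / f z - 1‖ := by
  obtain ⟨g, hgan, hg0, hg1, hg2, hgre⟩ := hg
  intro z hz0 hzρ
  obtain ⟨hρ0, hρ1⟩ := hρ
  have hm0 : 0 ≤ m := by rw [hm]; exact norm_nonneg _
  have hn0 : 0 ≤ n := by rw [hn]; exact norm_nonneg _
  have hn2 : n ≤ 2 := by
    rw [hn, norm_mul, Complex.norm_two]; linarith
  -- the polynomial
  set q : ℝ → ℝ := fun x => 1 - (m + n)*x - 3*(6 + m*n)*x^2 - 17*(m + n)*x^3 - 12*(3 + m*n)*x^4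
      - 15*(m + n)*x^5 - (14 + m*n)*x^6 + (m + n)*x^7 + 3*x^8 with hqdef
  have hqcont : Continuous q := by rw [hqdef]; fun_prop
  have hq0 : q 0 = 1 := by rw [hqdef]; norm_num
  have hmn0 : 0 ≤ m*n := mul_nonneg hm0 hn0
  have hroot_min : ∀ x : ℝ, 0 < x → x < 1 → q x = 0 → ρ ≤ x := by
    intro x h1 h2 h3
    exact hsmall x ⟨h1, h2⟩ h3
  have hivt : ∀ y : ℝ, 0 < y → y < 1 → q y ≤ 0 → ρ ≤ y := by
    intro y hy0 hy1 hqy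
    have h07 : (0:ℝ) ∈ Set.Icc (q y) (q 0) := ⟨hqy, by rw [hq0]; norm_num⟩
    obtain ⟨x, hx, hqx⟩ := intermediate_value_Icc' hy0.le (hqcont.continuousOn) h07
    have hxne : x ≠ 0 := by
      intro h; rw [h, hq0] at hqx; norm_num at hqx
    have hx0 : 0 < x := lt_of_le_of_ne hx.1 (Ne.symm hxne)
    exact le_trans (hroot_min x hx0 (lt_of_le_of_lt hx.2 hy1) hqx) hx.2
  have hρ7 : ρ ≤ 0.7 := by
    apply hivt 0.7 (by norm_num) (by norm_num)
    rw [hqdef]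
    nlinarith [hmn0, hm0, hn0]
  set r := ‖z‖ with hrdef
  have hr0 : 0 < r := hz0
  have hr7 : r < 0.7 := lt_of_lt_of_le hzρ hρ7
  have hr1 : r < 1 := by linarith
  have hqr : 0 < q r := by
    by_contra hcon
    push_neg at hcon
    have := hivt r hr0 hr1 hcon
    linarith
  have hzball : z ∈ ball (0:ℂ) 1 := by
    rw [mem_ball, dist_zero_right]; linarith
  have hzne : z ≠ 0 := by
    have h : 0 < ‖z‖ := hz0
    exact norm_pos_iff.mp h
  have hpos1 : (0:ℝ) < 1+r^2 := by positivity
  have hpos2 : (0:ℝ) < 1-r^2 := by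
    nlinarith [mul_pos (show (0:ℝ) < 1 - r by linarith) (show (0:ℝ) < 1 + r by linarith)]
  have hpos3 : (0:ℝ) < 1+m*r+r^2 := by
    linarith [mul_nonneg hm0 hr0.le, sq_nonneg r]
  have hpos4 : (0:ℝ) < 1+n*r+r^2 := by
    linarith [mul_nonneg hn0 hr0.le, sq_nonneg r]
  -- structure functions
  set F := dslope f 0 with hFdef
  set G := dslope g 0 with hGdef
  have hFd : DifferentiableOn ℂ F (ball 0 1) :=
    (differentiableOn_dslope (ball_mem_nhds _ one_pos)).mpr (fun w hw => (hf w hw).differentiableWithinAt)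
  have hGd : DifferentiableOn ℂ G (ball 0 1) :=
    (differentiableOn_dslope (ball_mem_nhds _ one_pos)).mpr (fun w hw => (hgan w hw).differentiableWithinAt)
  have hF0 : F 0 = 1 := by rw [hFdef, dslope_same]; exact hf1
  have hG0 : G 0 = 1 := by rw [hGdef, dslope_same]; exact hg1
  have hFderiv0 : deriv F 0 = 4*b := by
    rw [hFdef, snd_coeff f hf hf0, hf2]
  have hGderiv0 : deriv G 0 = 2*c := by
    rw [hGdef, snd_coeff g hgan hg0, hg2]
  have hfF : ∀ w : ℂ, f w = w * F w := dslope_fact f hf0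
  have hgG : ∀ w : ℂ, g w = w * G w := dslope_fact g hg0
  have hgne : ∀ w ∈ ball (0:ℂ) 1, w ≠ 0 → g w ≠ 0 := by
    intro w hw hw0 h
    have := (hgre w hw hw0).2
    rw [h] at this; simp at this
  have hGne : ∀ w ∈ ball (0:ℂ) 1, G w ≠ 0 := by
    intro w hw
    rcases eq_or_ne w 0 with rfl | hw0
    · rw [hG0]; norm_num
    · intro h
      have := hgne w hw hw0
      rw [hgG w, h, mul_zero] at this
      exact this rfl
  have h1w2 : ∀ w ∈ ball (0:ℂ) 1, (1:ℂ) - w^2 ≠ 0 := by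
    intro w hw h
    have hwlt : ‖w‖ < 1 := by simpa [mem_ball, dist_zero_right] using hw
    have : (1:ℂ) = w^2 := by linear_combination h
    have := congrArg (‖·‖) this
    rw [norm_pow, norm_one] at this
    nlinarith [norm_nonneg w]
  -- p₁ and p₂
  set p₁ : ℂ → ℂ := fun w => F w / G w with hp₁def
  set p₂ : ℂ → ℂ := fun w => G w * (1 - w^2) with hp₂def
  have hp₁d : DifferentiableOn ℂ p₁ (ball 0 1) := hFd.div hGd hGne
  have hp₂d : DifferentiableOn ℂ p₂ (ball 0 1) :=
    hGd.mul ((differentiableOn_const 1).sub (differentiable_pow 2).differentiableOn)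
  have hp₁0 : p₁ 0 = 1 := by rw [hp₁def]; simp [hF0, hG0]
  have hp₂0 : p₂ 0 = 1 := by rw [hp₂def]; simp [hG0]
  have hp₁re : ∀ w ∈ ball (0:ℂ) 1, 0 < (p₁ w).re := by
    intro w hw
    rcases eq_or_ne w 0 with rfl | hw0
    · rw [hp₁0]; norm_num
    · have key : p₁ w = f w / g w := by
        rw [hp₁def]
        simp only
        rw [hfF w, hgG w, mul_div_mul_left _ _ hw0]
      rw [key]; exact (hgre w hw hw0).1
  have hp₂re : ∀ w ∈ ball (0:ℂ) 1, 0 < (p₂ w).re := by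
    intro w hw
    rcases eq_or_ne w 0 with rfl | hw0
    · rw [hp₂0]; norm_num
    · have key : p₂ w = g w * (1 - w^2) / w := by
        rw [hp₂def]
        simp only
        rw [hgG w]
        field_simp
      rw [key]; exact (hgre w hw hw0).2
  have h0mem : (0:ℂ) ∈ ball (0:ℂ) 1 := by simp
  -- derivative values at 0
  have hFat : HasDerivAt F (4*b) 0 := by
    have := (hFd.differentiableAt (isOpen_ball.mem_nhds h0mem)).hasDerivAt
    rwa [hFderiv0] at this
  have hGat : HasDerivAt G (2*c) 0 := by
    have := (hGd.differentiableAt (isOpen_ball.mem_nhds h0mem)).hasDerivAt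
    rwa [hGderiv0] at this
  have hG0ne : G 0 ≠ 0 := by rw [hG0]; norm_num
  have hp₁deriv0 : deriv p₁ 0 = 4*b - 2*c := by
    have := (hFat.fun_div hGat hG0ne).deriv
    rw [hp₁def]
    rw [this, hF0, hG0]
    simp
  have hp₂deriv0 : deriv p₂ 0 = 2*c := by
    have hpow : HasDerivAt (fun w : ℂ => (1:ℂ) - w^2) (-(2*0^1)) 0 := by
      simpa using (hasDerivAt_pow 2 (0:ℂ)).const_sub 1
    have := (hGat.fun_mul hpow).deriv
    rw [hp₂def, this, hG0]
    simp
  -- apply carat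
  have hαm : ‖deriv p₁ 0‖ = 2*(m/2) := by
    rw [hp₁deriv0, hm]; ring_nf
  have hαn : ‖deriv p₂ 0‖ = 2*(n/2) := by
    rw [hp₂deriv0, hn]; ring_nf
  have hA := carat p₁ hp₁d hp₁0 hp₁re (m/2) hαm (by linarith) z hzball
  have hB := carat p₂ hp₂d hp₂0 hp₂re (n/2) hαn (by linarith) z hzball
  rw [← hrdef] at hA hB
  -- the log-derivative identity
  have hp₁ne : p₁ z ≠ 0 := by
    intro h; have := hp₁re z hzball; rw [h] at this; simp at this
  have hp₂ne : p₂ z ≠ 0 := by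
    intro h; have := hp₂re z hzball; rw [h] at this; simp at this
  have h1z2 : (1:ℂ) - z^2 ≠ 0 := h1w2 z hzball
  have hfw : ∀ w ∈ ball (0:ℂ) 1, f w = w * p₁ w * p₂ w / (1 - w^2) := by
    intro w hw
    have h2 := h1w2 w hw
    have hGw := hGne w hw
    rw [hfF w, hp₁def, hp₂def]
    simp only
    field_simp
  have hp₁at : HasDerivAt p₁ (deriv p₁ z) z :=
    (hp₁d.differentiableAt (isOpen_ball.mem_nhds hzball)).hasDerivAt
  have hp₂at : HasDerivAt p₂ (deriv p₂ z) z :=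
    (hp₂d.differentiableAt (isOpen_ball.mem_nhds hzball)).hasDerivAt
  have hfz : f z = z * p₁ z * p₂ z / (1 - z^2) := hfw z hzball
  have hfzne : f z ≠ 0 := by
    rw [hfz]
    apply div_ne_zero _ h1z2
    exact mul_ne_zero (mul_ne_zero hzne hp₁ne) hp₂ne
  have hderivf : deriv f z = ((1 * p₁ z + z * deriv p₁ z) * p₂ z + (z * p₁ z) * deriv p₂ z) * (1 - z^2) / (1-z^2)^2
      - (z * p₁ z * p₂ z) * (-(2*z^1)) / (1-z^2)^2 := by
    have hev : f =ᶠ[nhds z] fun w => w * p₁ w * p₂ w / (1 - w^2) :=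
      Filter.eventuallyEq_of_mem (isOpen_ball.mem_nhds hzball) hfw
    rw [hev.deriv_eq]
    have hnum : HasDerivAt (fun w => w * p₁ w * p₂ w)
        ((1 * p₁ z + z * deriv p₁ z) * p₂ z + (z * p₁ z) * deriv p₂ z) z := by
      have h1 := (hasDerivAt_id z).fun_mul hp₁at
      simp only [id_eq, one_mul] at h1 ⊢
      exact h1.fun_mul hp₂at
    have hden : HasDerivAt (fun w : ℂ => (1:ℂ) - w^2) (-(2*z^1)) z := by
      simpa using (hasDerivAt_pow 2 z).const_sub 1
    have := (hnum.fun_div hden h1z2).deriv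
    rw [this]
    ring
  have hkey : z * deriv f z / f z - 1 =
      2*z^2/(1-z^2) + z * deriv p₁ z / p₁ z + z * deriv p₂ z / p₂ z := by
    rw [hderivf, hfz]
    field_simp
    ring
  -- final real estimates
  set A := z * deriv p₁ z / p₁ z with hAdef
  set B := z * deriv p₂ z / p₂ z with hBdef
  set u := z^2 with hudef
  set s := ‖u‖ with hsdef
  have hsr : s = r^2 := by rw [hsdef, hudef, norm_pow, ← hrdef]
  have hs0 : 0 ≤ s := norm_nonneg u
  have hs5 : s < 1/2 := by rw [hsr]; nlinarith
  set d := ‖1 - u‖ with hddef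
  have h1une : (1:ℂ) - u ≠ 0 := h1z2
  have hd0 : 0 < d := norm_pos_iff.mpr h1une
  have hd_le : d ≤ 1 + s := by
    rw [hddef, hsdef]
    calc ‖1 - u‖ ≤ ‖(1:ℂ)‖ + ‖u‖ := by
          exact le_trans (norm_sub_le _ _) (by simp)
      _ = 1 + ‖u‖ := by rw [norm_one]
  have hd_ge : 1 - s ≤ d := by
    rw [hddef, hsdef]
    have := norm_sub_norm_le (1:ℂ) u
    simpa using this
  -- real part of (1+u)/(1-u)
  have hreh : ((1+u)/(1-u)).re = (1 - s^2)/d^2 := by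
    rw [hddef, hsdef, Complex.div_re, Complex.sq_norm, Complex.sq_norm, Complex.normSq_apply, Complex.normSq_apply]
    have hns : (1-u).re^2 + (1-u).im^2 ≠ 0 := by
      intro h
      have : Complex.normSq (1-u) = 0 := by rw [Complex.normSq_apply]; linear_combination h
      exact h1une (Complex.normSq_eq_zero.mp this)
    simp only [Complex.add_re, Complex.add_im, Complex.sub_re, Complex.sub_im, Complex.one_re,
      Complex.one_im] at *
    field_simp
    ring
  have habsh : ‖2*u/(1-u)‖ = 2*s/d := by
    rw [norm_div, norm_mul, Complex.norm_two, ← hsdef, ← hddef]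
  -- lower bound for Re h - |h-1|
  have hhlow : (1 - 3*s)/(1+s) ≤ (1 - s^2)/d^2 - 2*s/d := by
    have h1s : (0:ℝ) < 1 + s := by linarith
    have hfact : (1 - s^2)/d^2 - 2*s/d - (1-3*s)/(1+s)
        = (1 + s - d)*((1-3*s)*d + (1-s^2)) / (d^2*(1+s)) := by
      field_simp
      ring
    have hnum : 0 ≤ (1 + s - d)*((1-3*s)*d + (1-s^2)) := by
      apply mul_nonneg
      · linarith
      · rcases le_total (1-3*s) 0 with hcs | hcs
        · have : (1-3*s)*(1+s) ≤ (1-3*s)*d := by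
            apply mul_le_mul_of_nonpos_left hd_le hcs
          nlinarith
        · nlinarith [mul_nonneg hcs hd0.le]
    have : 0 ≤ (1 - s^2)/d^2 - 2*s/d - (1-3*s)/(1+s) := by
      rw [hfact]
      positivity
    linarith
  -- decompose W
  set W := z * deriv f z / f z with hWdef
  have hW1 : W - 1 = 2*u/(1-u) + A + B := hkey
  have hWre : W.re = ((1+u)/(1-u)).re + A.re + B.re := by
    have : W = (1+u)/(1-u) + A + B := by
      have hid : (1:ℂ) + 2*u/(1-u) = (1+u)/(1-u) := by field_simp; ring
      linear_combination hW1 + hid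
    rw [this]
    simp [Complex.add_re]
  have hWabs : ‖W - 1‖ ≤ 2*s/d + ‖A‖ + ‖B‖ := by
    rw [hW1, ← habsh]
    calc ‖2*u/(1-u) + A + B‖ ≤ ‖2*u/(1-u) + A‖ + ‖B‖ :=
          norm_add_le _ _
      _ ≤ ‖2*u/(1-u)‖ + ‖A‖ + ‖B‖ := by
          linarith [norm_add_le (2*u/(1-u)) A]
  have hAre : -(‖A‖) ≤ A.re := by
    have := Complex.abs_re_le_norm A
    rw [abs_le] at this
    exact this.1
  have hBre : -(‖B‖) ≤ B.re := by
    have := Complex.abs_re_le_norm B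
    rw [abs_le] at this
    exact this.1
  -- bounds on |A|, |B|
  have hQm : (0:ℝ) < (1 - r^2) * (1 + 2*(m/2)*r + r^2) := by
    have e3 : (1 + 2*(m/2)*r + r^2) = 1 + m*r + r^2 := by ring
    rw [e3]; exact mul_pos hpos2 hpos3
  have hQn : (0:ℝ) < (1 - r^2) * (1 + 2*(n/2)*r + r^2) := by
    have e4 : (1 + 2*(n/2)*r + r^2) = 1 + n*r + r^2 := by ring
    rw [e4]; exact mul_pos hpos2 hpos4
  have hAbound : ‖A‖ ≤ 2*r*((m/2)*(1+r^2)+2*r) / ((1 - r^2) * (1 + 2*(m/2)*r + r^2)) := by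
    rw [le_div_iff₀ hQm]
    exact hA
  have hBbound : ‖B‖ ≤ 2*r*((n/2)*(1+r^2)+2*r) / ((1 - r^2) * (1 + 2*(n/2)*r + r^2)) := by
    rw [le_div_iff₀ hQn]
    exact hB
  -- the polynomial identity
  have hident : (1 - 3*r^2)/(1+r^2)
      - 2*(2*r*((m/2)*(1+r^2)+2*r) / ((1 - r^2) * (1 + 2*(m/2)*r + r^2)))
      - 2*(2*r*((n/2)*(1+r^2)+2*r) / ((1 - r^2) * (1 + 2*(n/2)*r + r^2)))
      = q r / ((1+r^2) * ((1 - r^2) * ((1 + m*r + r^2) * (1 + n*r + r^2)))) := by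
    have h := ident_poly m n r hpos1 hpos2 hpos3 hpos4
    rw [h]
  have hfrac : 0 < q r / ((1+r^2) * ((1 - r^2) * ((1 + m*r + r^2) * (1 + n*r + r^2)))) := by
    apply div_pos hqr
    exact mul_pos hpos1 (mul_pos hpos2 (mul_pos hpos3 hpos4))
  -- conclude
  have hs_eq : (1 - 3*s)/(1+s) = (1 - 3*r^2)/(1+r^2) := by rw [hsr]
  have final : 2*s/d + ‖A‖ + ‖B‖ < ((1+u)/(1-u)).re - ‖A‖ - ‖B‖ := by
    have c1 : (1-3*r^2)/(1+r^2) ≤ (1 - s^2)/d^2 - 2*s/d := by rw [← hs_eq]; exact hhlow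
    have c2 : ((1+u)/(1-u)).re = (1 - s^2)/d^2 := hreh
    linarith [hAbound, hBbound, hident ▸ hfrac]
  calc ‖W - 1‖ ≤ 2*s/d + ‖A‖ + ‖B‖ := hWabs
    _ < ((1+u)/(1-u)).re - ‖A‖ - ‖B‖ := final
    _ ≤ W.re := by rw [hWre]; linarith
end

section
/- Let b, c ∈ ℂ with |b| ≤ 1, |c| ≤ 1, set m = |4b − 2c| and n = |2c|, and assume m ≤ 2. Let ρ₃ be the smallest root in (0,1) of the equation (1 − √2) + (2 − √2)(m+n) r + (11 − √2 + 3 m n − √2 m n) r² + 8(m+n) r³ + (11 + √2 + 3 m n + √2 m n) r⁴ + (2 + √2)(m+n) r⁵ + (1 + √2) r⁶ = 0 (such a root exists). Then for every f ∈ K²_{b,c} and every z ∈ ℂ with 0 < |z| < ρ₃, one has |(z·f'(z)/f(z))² − 1| < 1. (That is, ρ₃ is the radius of lemniscate starlikeness for the class K²_{b,c}.) -/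
open Complex Real


section Aux
open Complex Metric Set ComplexConjugate Filter


lemma normSq_mobius_sub (α y : ℂ) :
    normSq (1 - conj α * y) - normSq (y - α) = (1 - normSq α) * (1 - normSq y) := by
  simp [Complex.normSq_apply, Complex.conj_re, Complex.conj_im]
  ring

lemma abs_lt_abs_of_normSq {x y : ℂ} (h : normSq x < normSq y) :
    ‖x‖ < ‖y‖ := by
  rw [Complex.norm_def, Complex.norm_def]
  exact Real.sqrt_lt_sqrt (Complex.normSq_nonneg _) h

lemma normSq_lt_one {y : ℂ} (hy : ‖y‖ < 1) : normSq y < 1 := by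
  have := Complex.sq_norm y; nlinarith [norm_nonneg y]

lemma mobius_mem {α y : ℂ} (hα : ‖α‖ < 1) (hy : ‖y‖ < 1) :
    ‖(y - α) / (1 - conj α * y)‖ < 1 := by
  have h1 : normSq α < 1 := normSq_lt_one hα
  have h2 : normSq y < 1 := normSq_lt_one hy
  have key := normSq_mobius_sub α y
  have hlt : normSq (y - α) < normSq (1 - conj α * y) := by
    nlinarith [Complex.normSq_nonneg (y - α)]
  have hne : (1 - conj α * y) ≠ 0 := by
    intro h; rw [h] at hlt
    simp only [Complex.normSq_zero] at hlt
    exact absurd hlt (Complex.normSq_nonneg (y - α)).not_gt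
  rw [norm_div, div_lt_one (norm_pos_iff.mpr hne)]
  exact abs_lt_abs_of_normSq hlt

lemma mobius_denom_ne {α y : ℂ} (hα : ‖α‖ < 1) (hy : ‖y‖ < 1) :
    (1 - conj α * y) ≠ 0 := by
  intro h
  have : ‖conj α * y‖ < 1 := by
    rw [norm_mul, Complex.norm_conj]
    calc ‖α‖ * ‖y‖ ≤ ‖α‖ * 1 :=
      mul_le_mul_of_nonneg_left hy.le (norm_nonneg _)
    _ < 1 := by simpa using hα
  rw [sub_eq_zero] at h
  rw [← h] at this; simp at this

lemma normSq_sub' (x y : ℂ) :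
    normSq (x - y) = normSq x + normSq y - 2 * (conj y * x).re := by
  simp [Complex.normSq_apply, Complex.conj_re, Complex.conj_im]; ring

lemma normSq_one_sub_mul (y x : ℂ) :
    normSq (1 - conj y * x) = 1 + normSq y * normSq x - 2 * (conj y * x).re := by
  simp [Complex.normSq_apply, Complex.conj_re, Complex.conj_im]; ring

/-- Schwarz–Pick, value version, strict self-maps. -/
lemma sp1_strict {u : ℂ → ℂ} (hd : DifferentiableOn ℂ u (ball 0 1))
    (hb : ∀ y ∈ ball (0:ℂ) 1, ‖u y‖ < 1) {z : ℂ} (hz : ‖z‖ < 1) :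
    ‖u z‖ * (1 + ‖u 0‖ * ‖z‖)
      ≤ ‖u 0‖ + ‖z‖ := by
  have hzb : z ∈ ball (0:ℂ) 1 := by simpa [mem_ball, dist_eq_norm] using hz
  have h0b : (0:ℂ) ∈ ball (0:ℂ) 1 := by simp
  set α := u 0 with hα
  have hαlt : ‖α‖ < 1 := hb 0 h0b
  set v : ℂ → ℂ := fun y => (u y - α) / (1 - conj α * u y) with hv
  have hdenne : ∀ y ∈ ball (0:ℂ) 1, (1 - conj α * u y) ≠ 0 := fun y hy =>
    mobius_denom_ne hαlt (hb y hy)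
  have hvd : DifferentiableOn ℂ v (ball 0 1) := by
    apply DifferentiableOn.div
    · exact hd.sub (differentiableOn_const _)
    · exact (differentiableOn_const _).sub ((differentiableOn_const _).mul hd)
    · exact hdenne
  have hvm : MapsTo v (ball (0:ℂ) 1) (ball (0:ℂ) 1) := fun y hy => by
    simpa [mem_ball, dist_eq_norm, v] using mobius_mem hαlt (hb y hy)
  have hv0 : v 0 = 0 := by simp [v, hα]
  have key : ‖v z‖ ≤ ‖z‖ :=
    Complex.norm_le_norm_of_mapsTo_ball hvd (hvm.mono_right ball_subset_closedBall) hv0 hz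
  have key2 : ‖u z - α‖ ≤ ‖z‖ * ‖1 - conj α * u z‖ := by
    rw [hv] at key
    simp only [norm_div] at key
    rw [div_le_iff₀ (norm_pos_iff.mpr (hdenne z hzb))] at key
    linarith
  have key3 : normSq (u z - α) ≤ (‖z‖)^2 * normSq (1 - conj α * u z) := by
    have h := mul_le_mul key2 key2 (norm_nonneg _) (by positivity)
    calc normSq (u z - α) = ‖u z - α‖ * ‖u z - α‖ := by
          rw [← Complex.sq_norm]; ring
    _ ≤ (‖z‖ * ‖1 - conj α * u z‖) *
          (‖z‖ * ‖1 - conj α * u z‖) := h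
    _ = (‖z‖)^2 * normSq (1 - conj α * u z) := by
          rw [← Complex.sq_norm]; ring
  set s := ‖u z‖ with hs
  set a := ‖α‖ with ha
  set r := ‖z‖ with hr
  set x := (conj α * u z).re with hx
  have hs1 : s < 1 := hb z hzb
  have hsq : normSq (u z) = s^2 := (Complex.sq_norm _).symm
  have haq : normSq α = a^2 := (Complex.sq_norm _).symm
  have hxle : |x| ≤ a * s := by
    calc |x| ≤ ‖conj α * u z‖ := Complex.abs_re_le_norm _
    _ = a * s := by rw [norm_mul, Complex.norm_conj]
  rw [normSq_sub' (u z) α, normSq_one_sub_mul α (u z), hsq, haq] at key3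
  have hxle1 := (abs_le.mp hxle).2
  have hrnn : 0 ≤ r := norm_nonneg _
  have hann : 0 ≤ a := norm_nonneg _
  have hsnn : 0 ≤ s := norm_nonneg _
  have hr2 : 0 ≤ 1 - r^2 := by nlinarith
  have hF1F2 : (s*(1+a*r)-(a+r))*(s*(1-a*r)-(a-r)) ≤ 0 := by
    nlinarith [mul_nonneg hr2 (by linarith : (0:ℝ) ≤ a*s - x)]
  by_contra hG
  push_neg at hG
  have hF1 : 0 < s*(1+a*r)-(a+r) := by linarith
  have has : a*s ≤ 1 := by nlinarith
  have hdiff : s*(1+a*r)-(a+r) ≤ s*(1-a*r)-(a-r) := by nlinarith [mul_nonneg hrnn (by linarith : (0:ℝ) ≤ 1 - a*s)]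
  nlinarith [mul_pos hF1 (lt_of_lt_of_le hF1 hdiff)]

/-- Schwarz–Pick, derivative version, strict self-maps. -/
lemma sp2_strict {u : ℂ → ℂ} (hd : DifferentiableOn ℂ u (ball 0 1))
    (hb : ∀ y ∈ ball (0:ℂ) 1, ‖u y‖ < 1) {z : ℂ} (hz : ‖z‖ < 1) :
    ‖deriv u z‖ * (1 - ‖z‖^2) ≤ 1 - ‖u z‖^2 := by
  have hzb : z ∈ ball (0:ℂ) 1 := by simpa [mem_ball, dist_eq_norm] using hz
  set w₀ := u z with hw₀
  have hw₀lt : ‖w₀‖ < 1 := hb z hzb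
  set σ : ℂ → ℂ := fun ζ => (ζ + z) / (1 + conj z * ζ) with hσdef
  have hsigeq : ∀ ζ : ℂ, σ ζ = (ζ - (-z)) / (1 - conj (-z) * ζ) := by
    intro ζ
    simp only [hσdef, map_neg, neg_mul, mul_neg, sub_neg_eq_add, mul_comm]
  have hzneglt : ‖-z‖ < 1 := by simpa using hz
  have hσmem : ∀ ζ ∈ ball (0:ℂ) 1, σ ζ ∈ ball (0:ℂ) 1 := by
    intro ζ hζ
    rw [mem_ball, dist_eq_norm, sub_zero, hsigeq]
    exact mobius_mem hzneglt (by simpa [mem_ball, dist_eq_norm] using hζ)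
  have hσden : ∀ ζ ∈ ball (0:ℂ) 1, (1 + conj z * ζ) ≠ 0 := by
    intro ζ hζ
    have := mobius_denom_ne hzneglt (y := ζ) (by simpa [mem_ball, dist_eq_norm] using hζ)
    intro h; apply this; rw [map_neg]; linear_combination h
  have hσ0 : σ 0 = z := by simp [hσdef]
  have hσdiff : DifferentiableOn ℂ σ (ball 0 1) := by
    apply DifferentiableOn.div
    · exact (differentiableOn_id).add_const _
    · exact ((differentiable_id.const_mul (conj z)).const_add 1).differentiableOn
    · exact hσden
  have h0b : (0:ℂ) ∈ ball (0:ℂ) 1 := by simp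
  -- G
  set G : ℂ → ℂ := fun ζ => (u (σ ζ) - w₀) / (1 - conj w₀ * u (σ ζ)) with hGdef
  have hGden : ∀ ζ ∈ ball (0:ℂ) 1, (1 - conj w₀ * u (σ ζ)) ≠ 0 := fun ζ hζ =>
    mobius_denom_ne hw₀lt (hb _ (hσmem ζ hζ))
  have huσdiff : DifferentiableOn ℂ (fun ζ => u (σ ζ)) (ball 0 1) :=
    hd.comp hσdiff hσmem
  have hGdiff : DifferentiableOn ℂ G (ball 0 1) := by
    apply DifferentiableOn.div
    · exact huσdiff.sub_const _
    · exact (differentiableOn_const _).sub ((differentiableOn_const _).mul huσdiff)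
    · exact hGden
  have hGmaps : MapsTo G (ball (0:ℂ) 1) (ball (0:ℂ) 1) := fun ζ hζ => by
    simpa [mem_ball, dist_eq_norm, hGdef] using mobius_mem hw₀lt (hb _ (hσmem ζ hζ))
  have hG0 : G 0 = 0 := by simp [hGdef, hσ0, hw₀]
  -- derivative of G at 0
  have hσder : HasDerivAt σ (1 - z * conj z) 0 := by
    have h1 : HasDerivAt (fun ζ : ℂ => ζ + z) 1 0 := (hasDerivAt_id 0).add_const z
    have h2 : HasDerivAt (fun ζ : ℂ => 1 + conj z * ζ) (conj z) 0 := by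
      simpa using ((hasDerivAt_id 0).const_mul (conj z)).const_add 1
    have h3 := h1.div h2 (by simp)
    refine h3.congr_deriv ?_
    simp
  have hune : DifferentiableAt ℂ u z := hd.differentiableAt (isOpen_ball.mem_nhds hzb)
  have huder : HasDerivAt u (deriv u z) z := hune.hasDerivAt
  have huσder : HasDerivAt (fun ζ => u (σ ζ)) (deriv u z * (1 - z * conj z)) 0 := by
    have := HasDerivAt.comp 0 (by rwa [hσ0]) hσder
    exact this
  have hwne : (1 : ℂ) - conj w₀ * w₀ ≠ 0 := by
    intro h
    have h2 : normSq w₀ < 1 := normSq_lt_one hw₀lt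
    rw [sub_eq_zero] at h
    have : (1:ℂ).re = (conj w₀ * w₀).re := by rw [h]
    simp [Complex.mul_conj'] at this
    rw [mul_comm, Complex.mul_conj] at h
    have := congrArg Complex.re h
    simp at this
    rw [← this] at h2
    simp at h2
  have hGder : HasDerivAt G ((deriv u z * (1 - z * conj z)) / (1 - conj w₀ * w₀)) 0 := by
    have hnum : HasDerivAt (fun ζ => u (σ ζ) - w₀) (deriv u z * (1 - z * conj z)) 0 :=
      huσder.sub_const _
    have hden : HasDerivAt (fun ζ => 1 - conj w₀ * u (σ ζ))
        (-(conj w₀ * (deriv u z * (1 - z * conj z)))) 0 := by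
      simpa using (huσder.const_mul (conj w₀)).const_sub 1
    have hdne : (1 : ℂ) - conj w₀ * u (σ 0) ≠ 0 := by rw [hσ0, ← hw₀]; exact hwne
    have h := hnum.div hden hdne
    rw [hσ0, ← hw₀] at h
    refine h.congr_deriv ?_
    field_simp
    ring
  have hkey : ‖deriv G 0‖ ≤ 1 :=
    Complex.norm_deriv_le_one_of_mapsTo_ball hGdiff (by rw [hG0]; exact hGmaps.mono_right ball_subset_closedBall) one_pos
  rw [hGder.deriv] at hkey
  rw [norm_div, norm_mul] at hkey
  have e1 : ‖1 - z * conj z‖ = 1 - ‖z‖ ^ 2 := by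
    rw [Complex.mul_conj, Complex.sq_norm]
    rw [← Complex.ofReal_one, ← Complex.ofReal_sub, Complex.norm_real]
    rw [Real.norm_of_nonneg]
    have := normSq_lt_one hz
    linarith
  have e2 : ‖1 - conj w₀ * w₀‖ = 1 - ‖w₀‖ ^ 2 := by
    rw [mul_comm, Complex.mul_conj, Complex.sq_norm]
    rw [← Complex.ofReal_one, ← Complex.ofReal_sub, Complex.norm_real]
    rw [Real.norm_of_nonneg]
    have := normSq_lt_one hw₀lt
    linarith
  rw [e1, e2, div_le_one (by nlinarith [normSq_lt_one hw₀lt, Complex.sq_norm w₀])] at hkey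
  exact hkey

lemma sp_scaled {u : ℂ → ℂ} (hd : DifferentiableOn ℂ u (ball 0 1))
    (hb : ∀ y ∈ ball (0:ℂ) 1, ‖u y‖ ≤ 1) {z : ℂ} (hz : ‖z‖ < 1)
    {ε : ℝ} (hε : ε ∈ Ioo (0:ℝ) 1) :
    ((1-ε) * ‖u z‖) * (1 + ((1-ε) * ‖u 0‖) * ‖z‖)
        ≤ (1-ε) * ‖u 0‖ + ‖z‖ ∧
    ((1-ε) * ‖deriv u z‖) * (1 - ‖z‖^2)
        ≤ 1 - ((1-ε) * ‖u z‖)^2 := by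
  obtain ⟨hε0, hε1⟩ := hε
  set v : ℂ → ℂ := fun y => ((1-ε : ℝ) : ℂ) * u y with hv
  have habs : ∀ y, ‖v y‖ = (1-ε) * ‖u y‖ := by
    intro y
    rw [hv]
    simp only [norm_mul, Complex.norm_real]
    rw [Real.norm_of_nonneg (by linarith)]
  have hvd : DifferentiableOn ℂ v (ball 0 1) := hd.const_smul (((1-ε:ℝ)):ℂ)
  have hvb : ∀ y ∈ ball (0:ℂ) 1, ‖v y‖ < 1 := by
    intro y hy
    rw [habs]
    calc (1-ε) * ‖u y‖ ≤ (1-ε) * 1 :=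
      mul_le_mul_of_nonneg_left (hb y hy) (by linarith)
    _ < 1 := by linarith
  have hvderiv : deriv v z = ((1-ε : ℝ) : ℂ) * deriv u z := by
    rw [hv]
    exact deriv_const_mul _ (hd.differentiableAt (isOpen_ball.mem_nhds
      (by simpa [mem_ball, dist_eq_norm] using hz)))
  constructor
  · have := sp1_strict hvd hvb hz
    rwa [habs, habs] at this
  · have := sp2_strict hvd hvb hz
    rwa [habs, hvderiv, norm_mul, Complex.norm_real,
      Real.norm_of_nonneg (by linarith : (0:ℝ) ≤ 1 - ε)] at this

/-- Schwarz–Pick, value version. -/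
lemma sp1 {u : ℂ → ℂ} (hd : DifferentiableOn ℂ u (ball 0 1))
    (hb : ∀ y ∈ ball (0:ℂ) 1, ‖u y‖ ≤ 1) {z : ℂ} (hz : ‖z‖ < 1) :
    ‖u z‖ * (1 + ‖u 0‖ * ‖z‖)
      ≤ ‖u 0‖ + ‖z‖ := by
  set s := ‖u z‖
  set a := ‖u 0‖
  set r := ‖z‖
  have key : ∀ ε ∈ Ioo (0:ℝ) 1,
      ((1-ε)*s) * (1 + ((1-ε)*a)*r) ≤ (1-ε)*a + r := fun ε hε => (sp_scaled hd hb hz hε).1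
  have h1 : Tendsto (fun ε : ℝ => ((1-ε)*s) * (1 + ((1-ε)*a)*r)) (nhdsWithin 0 (Ioi 0))
      (nhds (s * (1 + a*r))) := by
    have : Continuous (fun ε : ℝ => ((1-ε)*s) * (1 + ((1-ε)*a)*r)) := by continuity
    have h := this.tendsto 0
    simp only [sub_zero, one_mul] at h
    exact h.mono_left nhdsWithin_le_nhds
  have h2 : Tendsto (fun ε : ℝ => (1-ε)*a + r) (nhdsWithin 0 (Ioi 0)) (nhds (a + r)) := by
    have : Continuous (fun ε : ℝ => (1-ε)*a + r) := by continuity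
    have h := this.tendsto 0
    simp only [sub_zero, one_mul] at h
    exact h.mono_left nhdsWithin_le_nhds
  refine le_of_tendsto_of_tendsto h1 h2 ?_
  filter_upwards [Ioo_mem_nhdsGT_of_mem (Set.mem_Ico.mpr ⟨le_refl (0:ℝ), one_pos⟩)] with ε hε
  exact key ε hε

/-- Schwarz–Pick, derivative version. -/
lemma sp2 {u : ℂ → ℂ} (hd : DifferentiableOn ℂ u (ball 0 1))
    (hb : ∀ y ∈ ball (0:ℂ) 1, ‖u y‖ ≤ 1) {z : ℂ} (hz : ‖z‖ < 1) :
    ‖deriv u z‖ * (1 - ‖z‖^2) ≤ 1 - ‖u z‖^2 := by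
  set s := ‖u z‖
  set d := ‖deriv u z‖
  set r := ‖z‖
  have key : ∀ ε ∈ Ioo (0:ℝ) 1,
      ((1-ε)*d) * (1 - r^2) ≤ 1 - ((1-ε)*s)^2 := fun ε hε => (sp_scaled hd hb hz hε).2
  have h1 : Tendsto (fun ε : ℝ => ((1-ε)*d) * (1 - r^2)) (nhdsWithin 0 (Ioi 0))
      (nhds (d * (1 - r^2))) := by
    have : Continuous (fun ε : ℝ => ((1-ε)*d) * (1 - r^2)) := by continuity
    have h := this.tendsto 0
    simp only [sub_zero, one_mul] at h
    exact h.mono_left nhdsWithin_le_nhds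
  have h2 : Tendsto (fun ε : ℝ => 1 - ((1-ε)*s)^2) (nhdsWithin 0 (Ioi 0))
      (nhds (1 - s^2)) := by
    have : Continuous (fun ε : ℝ => 1 - ((1-ε)*s)^2) := by continuity
    have h := this.tendsto 0
    simp only [sub_zero, one_mul] at h
    exact h.mono_left nhdsWithin_le_nhds
  refine le_of_tendsto_of_tendsto h1 h2 ?_
  filter_upwards [Ioo_mem_nhdsGT_of_mem (Set.mem_Ico.mpr ⟨le_refl (0:ℝ), one_pos⟩)] with ε hε
  exact key ε hε

lemma real_step12 {r t d a : ℝ} (hr0 : 0 ≤ r) (hr1 : r < 1) (ht0 : 0 ≤ t) (ht1 : t ≤ 1)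
    (hd0 : 0 ≤ d) (ha0 : 0 ≤ a)
    (hsp2 : d * (1 - r^2) ≤ 1 - t^2) (hsp1 : t * (1 + a*r) ≤ a + r) :
    2*r*(t + r*d) / (1 - r^2*t^2) ≤ 2*r*(a + 2*r + a*r^2)/((1-r^2)*(1+2*a*r+r^2)) := by
  have h1 : (0:ℝ) < 1 - r^2 := by nlinarith
  have hrt : r*t ≤ r := by nlinarith
  have h2 : (0:ℝ) < 1 - r^2*t^2 := by nlinarith [mul_le_mul_of_nonneg_left (mul_le_mul ht1 ht1 ht0 zero_le_one) (mul_nonneg hr0 hr0)]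
  have h3 : (0:ℝ) < 1 + r*t := by nlinarith
  have h4 : (0:ℝ) < 1 + 2*a*r + r^2 := by positivity
  have k1 : (t + r*d)*(1 - r^2) ≤ (t + r)*(1 - r*t) := by nlinarith [mul_le_mul_of_nonneg_left hsp2 hr0]
  calc 2*r*(t + r*d) / (1 - r^2*t^2) ≤ 2*r*(t + r)/((1-r^2)*(1+r*t)) := by
        rw [div_le_div_iff₀ h2 (by positivity)]
        nlinarith [mul_le_mul_of_nonneg_left k1 (by positivity : (0:ℝ) ≤ 2*r*(1+r*t))]
  _ ≤ 2*r*(a + 2*r + a*r^2)/((1-r^2)*(1+2*a*r+r^2)) := by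
        rw [div_le_div_iff₀ (by positivity) (by positivity)]
        have key : (t+r)*(1+2*a*r+r^2) ≤ (a+2*r+a*r^2)*(1+r*t) := by
          nlinarith [mul_nonneg h1.le (by linarith : (0:ℝ) ≤ (a+r) - t*(1+a*r))]
        nlinarith [mul_le_mul_of_nonneg_left key (by positivity : (0:ℝ) ≤ 2*r*(1-r^2))]

lemma real_step3 {r m n s : ℝ} (hs : s = Real.sqrt 2) (hr0 : 0 < r) (hr1 : r < 1)
    (hm : 0 ≤ m) (hn : 0 ≤ n)
    (hP : (1-s) + (2-s)*(m+n)*r + (11-s+3*m*n-s*m*n)*r^2 + 8*(m+n)*r^3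
        + (11+s+3*m*n+s*m*n)*r^4 + (2+s)*(m+n)*r^5 + (1+s)*r^6 < 0) :
    r*(m+4*r+m*r^2)/((1-r^2)*(1+m*r+r^2)) + r*(n+4*r+n*r^2)/((1-r^2)*(1+n*r+r^2))
      + 2*r^2/(1-r^2) < s - 1 := by
  have h1 : (0:ℝ) < 1 - r^2 := by nlinarith
  have h2 : (0:ℝ) < 1 + m*r + r^2 := by positivity
  have h3 : (0:ℝ) < 1 + n*r + r^2 := by positivity
  have key : (s - 1) - (r*(m+4*r+m*r^2)/((1-r^2)*(1+m*r+r^2))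
      + r*(n+4*r+n*r^2)/((1-r^2)*(1+n*r+r^2)) + 2*r^2/(1-r^2))
      = (-((1-s) + (2-s)*(m+n)*r + (11-s+3*m*n-s*m*n)*r^2 + 8*(m+n)*r^3
        + (11+s+3*m*n+s*m*n)*r^4 + (2+s)*(m+n)*r^5 + (1+s)*r^6))
        / ((1-r^2)*(1+m*r+r^2)*(1+n*r+r^2)) := by
    field_simp
    ring
  have hpos : (0:ℝ) < (-((1-s) + (2-s)*(m+n)*r + (11-s+3*m*n-s*m*n)*r^2 + 8*(m+n)*r^3
        + (11+s+3*m*n+s*m*n)*r^4 + (2+s)*(m+n)*r^5 + (1+s)*r^6))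
        / ((1-r^2)*(1+m*r+r^2)*(1+n*r+r^2)) := by
    apply div_pos (by linarith) (by positivity)
  linarith [key ▸ hpos]

/-- Main Carathéodory-type log-derivative bound. -/
lemma carat_bound {p : ℂ → ℂ} (hd : DifferentiableOn ℂ p (ball 0 1))
    (hpos : ∀ y ∈ ball (0:ℂ) 1, 0 < (p y).re) (hp0 : p 0 = 1)
    {z : ℂ} (hz : ‖z‖ < 1) :
    ‖z * deriv p z / p z‖ ≤
      ‖z‖ * (‖deriv p 0‖ + 4*‖z‖
          + ‖deriv p 0‖ * ‖z‖^2) /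
        ((1 - ‖z‖^2) * (1 + ‖deriv p 0‖ * ‖z‖
          + ‖z‖^2)) := by
  have hzb : z ∈ ball (0:ℂ) 1 := by simpa [mem_ball, dist_eq_norm] using hz
  have hB : ball (0:ℂ) 1 ∈ nhds (0:ℂ) := ball_mem_nhds 0 one_pos
  have hpne : ∀ y ∈ ball (0:ℂ) 1, p y + 1 ≠ 0 := by
    intro y hy h
    have := hpos y hy
    have h2 : (p y + 1).re = 0 := by rw [h]; simp
    simp only [Complex.add_re, Complex.one_re] at h2
    linarith
  have hpzne : ∀ y ∈ ball (0:ℂ) 1, p y ≠ 0 := by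
    intro y hy h
    have := hpos y hy
    rw [h] at this; simp at this
  set w : ℂ → ℂ := fun y => (p y - 1) / (p y + 1) with hw
  have hwd : DifferentiableOn ℂ w (ball 0 1) := by
    apply DifferentiableOn.div
    · exact hd.sub_const _
    · exact hd.add_const _
    · exact hpne
  have hw0 : w 0 = 0 := by simp [hw, hp0]
  have hwlt : ∀ y ∈ ball (0:ℂ) 1, ‖w y‖ < 1 := by
    intro y hy
    have hre := hpos y hy
    have hns : normSq (p y - 1) < normSq (p y + 1) := by
      simp only [Complex.normSq_apply, Complex.sub_re, Complex.sub_im, Complex.add_re,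
        Complex.add_im, Complex.one_re, Complex.one_im]
      nlinarith
    rw [hw]
    simp only [norm_div]
    rw [div_lt_one (norm_pos_iff.mpr (hpne y hy))]
    exact abs_lt_abs_of_normSq hns
  -- φ = dslope w 0
  set φ : ℂ → ℂ := dslope w 0 with hφ
  have hφd : DifferentiableOn ℂ φ (ball 0 1) := (differentiableOn_dslope hB).mpr hwd
  have hwmaps : MapsTo w (ball (0:ℂ) 1) (ball (w 0) 1) := by
    rw [hw0]
    intro y hy
    simpa [mem_ball, dist_eq_norm] using hwlt y hy
  have hφle : ∀ y ∈ ball (0:ℂ) 1, ‖φ y‖ ≤ 1 := by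
    intro y hy
    have := Complex.norm_dslope_le_div_of_mapsTo_ball hwd (hwmaps.mono_right ball_subset_closedBall) hy
    simpa [hφ] using this
  -- w y = y * φ y
  have hwy : ∀ y, w y = y * φ y := by
    intro y
    rcases eq_or_ne y 0 with rfl | hy
    · simp [hw0]
    · rw [hφ, dslope_of_ne w hy, slope_def_field, hw0]
      field_simp
      ring
  -- derivative of w at 0
  have hp0' : DifferentiableAt ℂ p 0 := hd.differentiableAt hB
  have hwder0 : HasDerivAt w (deriv p 0 / 2) 0 := by
    have h1 : HasDerivAt (fun y => p y - 1) (deriv p 0) 0 := hp0'.hasDerivAt.sub_const 1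
    have h2 : HasDerivAt (fun y => p y + 1) (deriv p 0) 0 := hp0'.hasDerivAt.add_const 1
    have h3 := h1.div h2 (by rw [hp0]; norm_num)
    rw [hp0] at h3
    refine h3.congr_deriv ?_
    norm_num
    ring
  have hφ0 : ‖φ 0‖ = ‖deriv p 0‖ / 2 := by
    rw [hφ, dslope_same, hwder0.deriv, norm_div]
    simp
  -- derivative of w at z
  have hφz : DifferentiableAt ℂ φ z := hφd.differentiableAt (isOpen_ball.mem_nhds hzb)
  have hwderz : deriv w z = φ z + z * deriv φ z := by
    have h1 : HasDerivAt (fun y => y * φ y) (1 * φ z + z * deriv φ z) z :=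
      (hasDerivAt_id z).mul hφz.hasDerivAt
    have h2 : w = fun y => y * φ y := funext hwy
    rw [h2, h1.deriv]; ring
  -- derivative of w at z via p (quotient rule)
  have hpz' : DifferentiableAt ℂ p z := hd.differentiableAt (isOpen_ball.mem_nhds hzb)
  have hwpz : deriv w z = 2 * deriv p z / (p z + 1)^2 := by
    have h1 : HasDerivAt (fun y => p y - 1) (deriv p z) z := hpz'.hasDerivAt.sub_const 1
    have h2 : HasDerivAt (fun y => p y + 1) (deriv p z) z := hpz'.hasDerivAt.add_const 1
    have h3 := h1.div h2 (hpne z hzb)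
    rw [show deriv w z = _ from h3.deriv]
    have := hpne z hzb
    field_simp
    ring
  -- the identity deriv p z / p z = 2 deriv w z / (1 - w z ^ 2)
  have hwz2 : (1:ℂ) - w z^2 = 4 * p z / (p z + 1)^2 := by
    rw [hw]
    have := hpne z hzb
    field_simp
    ring
  have hwz2ne : (1:ℂ) - w z^2 ≠ 0 := by
    rw [hwz2]
    apply div_ne_zero
    · simpa using hpzne z hzb
    · exact pow_ne_zero 2 (hpne z hzb)
  have hiden : z * deriv p z / p z = 2 * z * deriv w z / (1 - w z^2) := by
    rw [hwpz, hwz2]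
    have h1 := hpne z hzb
    have h2 := hpzne z hzb
    field_simp
    ring
  -- abs estimates
  set r := ‖z‖ with hr
  set t := ‖φ z‖ with ht
  set dd := ‖deriv φ z‖ with hdd
  set a := ‖deriv p 0‖ with ha
  have ht1 : t ≤ 1 := hφle z hzb
  have ht0 : 0 ≤ t := norm_nonneg _
  have hr0 : 0 ≤ r := norm_nonneg _
  have hdd0 : 0 ≤ dd := norm_nonneg _
  have ha0 : 0 ≤ a := norm_nonneg _
  have habs_w : ‖w z‖ = r * t := by rw [hwy z, norm_mul]
  have hsp1' := sp1 hφd hφle hz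
  rw [hφ0] at hsp1'
  have hsp2' := sp2 hφd hφle hz
  have hlow : 1 - r^2*t^2 ≤ ‖1 - w z^2‖ := by
    have h1 : ‖(1:ℂ)‖ - ‖w z^2‖ ≤ ‖1 - w z^2‖ := by
      have := norm_sub_norm_le (1:ℂ) (w z^2)
      simpa using this
    rw [norm_pow, habs_w] at h1
    simp only [norm_one] at h1
    calc 1 - r^2*t^2 = 1 - (r*t)^2 := by ring
    _ ≤ ‖1 - w z^2‖ := h1
  have hpos2 : (0:ℝ) < 1 - r^2*t^2 := by
    nlinarith [mul_le_mul_of_nonneg_left (mul_le_mul ht1 ht1 ht0 zero_le_one)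
      (mul_nonneg hr0 hr0)]
  have hnum : ‖2 * z * deriv w z‖ ≤ 2*r*(t + r*dd) := by
    rw [hwderz]
    calc ‖2 * z * (φ z + z * deriv φ z)‖
        = 2 * r * ‖φ z + z * deriv φ z‖ := by
          rw [norm_mul, norm_mul]; simp [hr]
    _ ≤ 2 * r * (t + r * dd) := by
          apply mul_le_mul_of_nonneg_left _ (by positivity)
          calc ‖φ z + z * deriv φ z‖ ≤ t + ‖z * deriv φ z‖ :=
            norm_add_le _ _
          _ = t + r * dd := by rw [norm_mul]
  have hmain : ‖z * deriv p z / p z‖ ≤ 2*r*(t + r*dd) / (1 - r^2*t^2) := by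
    rw [hiden, norm_div]
    exact div_le_div₀ (by positivity) hnum hpos2 hlow
  refine hmain.trans ?_
  have hstep := real_step12 hr0 hz ht0 ht1 hdd0 (by positivity : (0:ℝ) ≤ a/2)
    (by linarith [hsp2'] : dd * (1 - r^2) ≤ 1 - t^2)
    (by linarith [hsp1'] : t * (1 + (a/2)*r) ≤ a/2 + r)
  refine hstep.trans (le_of_eq ?_)
  rw [show 2*r*(a/2 + 2*r + (a/2)*r^2) = r*(a + 4*r + a*r^2) by ring,
    show 1+2*(a/2)*r+r^2 = 1+a*r+r^2 by ring]

lemma deriv_dslope_zero (f : ℂ → ℂ) (hf : AnalyticAt ℂ f 0) :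
    deriv (dslope f 0) 0 = iteratedDeriv 2 f 0 / 2 := by
  obtain ⟨ps, hps⟩ := hf
  have h1 : deriv (dslope f 0) 0 = ps.fslope.coeff 1 :=
    (hps.has_fpower_series_dslope_fslope).deriv
  have h2 : ps.fslope.coeff 1 = ps.coeff 2 := FormalMultilinearSeries.coeff_fslope
  obtain ⟨R, hball⟩ := hps
  have h3 := hball.factorial_smul (1:ℂ) 2
  have h4 : iteratedDeriv 2 f 0 = iteratedFDeriv ℂ 2 f 0 (fun _ => 1) :=
    iteratedDeriv_eq_iteratedFDeriv
  rw [h1, h2]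
  rw [← h4] at h3
  have h5 : (Nat.factorial 2 : ℕ) • (ps 2) (fun _ => (1:ℂ)) = 2 * ps.coeff 2 := by
    have : (ps 2) (fun _ => (1:ℂ)) = ps.coeff 2 := rfl
    rw [this, Nat.factorial]
    norm_num
  rw [h5] at h3
  rw [← h3]
  ring

end Aux


section Main
open Complex Metric Set ComplexConjugate


set_option maxHeartbeats 2000000 in
theorem stmt_9 (b c : ℂ) (hb : ‖b‖ ≤ 1) (hc : ‖c‖ ≤ 1)
    (m : ℝ) (hm : m = ‖4 * b - 2 * c‖)
    (n : ℝ) (hn : n = ‖2 * c‖)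
    (hm2 : m ≤ 2)
    (f : ℂ → ℂ) (hf : AnalyticOnNhd ℂ f (Metric.ball (0:ℂ) 1))
    (hf0 : f 0 = 0) (hf1 : deriv f 0 = 1)
    (hf2 : iteratedDeriv 2 f 0 / 2 = 4 * b)
    (hg : ∃ g : ℂ → ℂ, AnalyticOnNhd ℂ g (Metric.ball (0:ℂ) 1) ∧
      g 0 = 0 ∧ deriv g 0 = 1 ∧ iteratedDeriv 2 g 0 / 2 = 2 * c ∧
      ∀ z ∈ Metric.ball (0:ℂ) 1, z ≠ 0 →
        0 < (f z / g z).re ∧ 0 < (g z * (1 - z ^ 2) / z).re)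
    (ρ : ℝ) (hρ : ρ ∈ Set.Ioo (0:ℝ) 1)
    (hroot : (1 - (Real.sqrt 2)) + (2 - (Real.sqrt 2))*(m + n)*ρ + (11 - (Real.sqrt 2) + 3*m*n - (Real.sqrt 2)*m*n)*ρ^2 + 8*(m + n)*ρ^3 + (11 + (Real.sqrt 2) + 3*m*n + (Real.sqrt 2)*m*n)*ρ^4 + (2 + (Real.sqrt 2))*(m + n)*ρ^5 + (1 + (Real.sqrt 2))*ρ^6 = 0)
    (hsmall : ∀ r ∈ Set.Ioo (0:ℝ) 1, (1 - (Real.sqrt 2)) + (2 - (Real.sqrt 2))*(m + n)*r + (11 - (Real.sqrt 2) + 3*m*n - (Real.sqrt 2)*m*n)*r^2 + 8*(m + n)*r^3 + (11 + (Real.sqrt 2) + 3*m*n + (Real.sqrt 2)*m*n)*r^4 + (2 + (Real.sqrt 2))*(m + n)*r^5 + (1 + (Real.sqrt 2))*r^6 = 0 → ρ ≤ r) :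
    ∀ z : ℂ, 0 < ‖z‖ → ‖z‖ < ρ →
      ‖(z * deriv f z / f z) ^ 2 - 1‖ < 1 := by
  obtain ⟨g, hgA, hg0, hg1, hg2, hpos⟩ := hg
  obtain ⟨hρ0, hρ1⟩ := hρ
  -- sqrt 2 facts
  obtain ⟨s, hs⟩ : ∃ s : ℝ, s = Real.sqrt 2 := ⟨_, rfl⟩
  rw [← hs] at hroot hsmall
  have hs2 : s^2 = 2 := by rw [hs]; exact Real.sq_sqrt (by norm_num)
  have hs1 : 1 < s := by nlinarith [Real.sqrt_nonneg 2]
  intro z hz0 hzρ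
  have hzne : z ≠ 0 := by
    intro h; rw [h] at hz0; simp at hz0
  have hz1 : ‖z‖ < 1 := hzρ.trans hρ1
  have hzb : z ∈ ball (0:ℂ) 1 := by simpa [mem_ball, dist_eq_norm] using hz1
  have hB : ball (0:ℂ) 1 ∈ nhds (0:ℂ) := ball_mem_nhds 0 one_pos
  have h0b : (0:ℂ) ∈ ball (0:ℂ) 1 := by simp
  -- nonvanishing
  have hgne : ∀ y ∈ ball (0:ℂ) 1, y ≠ 0 → g y ≠ 0 := by
    intro y hy hyne h
    have := (hpos y hy hyne).2
    rw [h] at this; simp at this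
  have hfne : ∀ y ∈ ball (0:ℂ) 1, y ≠ 0 → f y ≠ 0 := by
    intro y hy hyne h
    have := (hpos y hy hyne).1
    rw [h] at this; simp at this
  -- dslope setup
  set Df : ℂ → ℂ := dslope f 0 with hDf
  set Dg : ℂ → ℂ := dslope g 0 with hDg
  have hDfd : DifferentiableOn ℂ Df (ball 0 1) :=
    (differentiableOn_dslope hB).mpr hf.differentiableOn
  have hDgd : DifferentiableOn ℂ Dg (ball 0 1) :=
    (differentiableOn_dslope hB).mpr hgA.differentiableOn
  have hDf0 : Df 0 = 1 := by rw [hDf, dslope_same]; exact hf1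
  have hDg0 : Dg 0 = 1 := by rw [hDg, dslope_same]; exact hg1
  have hDfy : ∀ y : ℂ, y ≠ 0 → Df y = f y / y := by
    intro y hy
    rw [hDf, dslope_of_ne f hy, slope_def_field, hf0]
    ring
  have hDgy : ∀ y : ℂ, y ≠ 0 → Dg y = g y / y := by
    intro y hy
    rw [hDg, dslope_of_ne g hy, slope_def_field, hg0]
    ring
  have hDgne : ∀ y ∈ ball (0:ℂ) 1, Dg y ≠ 0 := by
    intro y hy
    rcases eq_or_ne y 0 with rfl | hyne
    · rw [hDg0]; exact one_ne_zero
    · rw [hDgy y hyne]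
      exact div_ne_zero (hgne y hy hyne) hyne
  -- p and q
  obtain ⟨p, hp⟩ : ∃ p : ℂ → ℂ, p = fun y => Df y / Dg y := ⟨_, rfl⟩
  obtain ⟨q, hq⟩ : ∃ q : ℂ → ℂ, q = fun y => Dg y * (1 - y^2) := ⟨_, rfl⟩
  have hpd : DifferentiableOn ℂ p (ball 0 1) := by
    rw [hp]; exact hDfd.div hDgd hDgne
  have hqd : DifferentiableOn ℂ q (ball 0 1) := by
    rw [hq]
    apply hDgd.mul
    exact ((differentiable_id.pow 2).const_sub 1).differentiableOn
  have hp0 : p 0 = 1 := by rw [hp]; simp [hDf0, hDg0]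
  have hq0 : q 0 = 1 := by rw [hq]; simp [hDg0]
  have hppos : ∀ y ∈ ball (0:ℂ) 1, 0 < (p y).re := by
    intro y hy
    rcases eq_or_ne y 0 with rfl | hyne
    · rw [hp0]; simp
    · have heq : p y = f y / g y := by
        rw [hp]
        simp only
        rw [hDfy y hyne, hDgy y hyne]
        field_simp
      rw [heq]; exact (hpos y hy hyne).1
  have hqpos : ∀ y ∈ ball (0:ℂ) 1, 0 < (q y).re := by
    intro y hy
    rcases eq_or_ne y 0 with rfl | hyne
    · rw [hq0]; simp
    · have heq : q y = g y * (1 - y^2) / y := by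
        rw [hq]
        simp only
        rw [hDgy y hyne]
        ring
      rw [heq]; exact (hpos y hy hyne).2
  -- derivatives at 0
  have hDf_at0 : DifferentiableAt ℂ Df 0 := hDfd.differentiableAt hB
  have hDg_at0 : DifferentiableAt ℂ Dg 0 := hDgd.differentiableAt hB
  have hDf'0 : deriv Df 0 = 4*b := by rw [hDf, deriv_dslope_zero f (hf 0 h0b), hf2]
  have hDg'0 : deriv Dg 0 = 2*c := by rw [hDg, deriv_dslope_zero g (hgA 0 h0b), hg2]
  have hp'0 : deriv p 0 = 4*b - 2*c := by
    have h := (hDf_at0.hasDerivAt.div hDg_at0.hasDerivAt (by rw [hDg0]; exact one_ne_zero))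
    rw [hp, show deriv (fun y => Df y / Dg y) 0 = _ from h.deriv, hDf0, hDg0, hDf'0, hDg'0]
    ring
  have hq'0 : deriv q 0 = 2*c := by
    have h2 : HasDerivAt (fun y : ℂ => 1 - y^2) (-(2*0)) 0 := by
      simpa using ((hasDerivAt_pow 2 (0:ℂ)).const_sub 1)
    have h := hDg_at0.hasDerivAt.mul h2
    rw [hq, show deriv (fun y => Dg y * (1 - y^2)) 0 = _ from h.deriv, hDg0, hDg'0]
    ring
  -- f y = y * Df y
  have hfy : ∀ y : ℂ, f y = y * Df y := by
    intro y
    rcases eq_or_ne y 0 with rfl | hy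
    · simp [hf0]
    · rw [hDfy y hy]; field_simp
  have hDfz_at : DifferentiableAt ℂ Df z := hDfd.differentiableAt (isOpen_ball.mem_nhds hzb)
  have hpz_at : DifferentiableAt ℂ p z := hpd.differentiableAt (isOpen_ball.mem_nhds hzb)
  have hqz_at : DifferentiableAt ℂ q z := hqd.differentiableAt (isOpen_ball.mem_nhds hzb)
  have hderivf : deriv f z = Df z + z * deriv Df z := by
    have h1 : HasDerivAt (fun y : ℂ => y * Df y) (1 * Df z + z * deriv Df z) z :=
      (hasDerivAt_id z).mul hDfz_at.hasDerivAt
    have h2 : deriv f z = deriv (fun y : ℂ => y * Df y) z :=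
      Filter.EventuallyEq.deriv_eq (Filter.Eventually.of_forall hfy)
    rw [h2, h1.deriv]; ring
  have hprod : ∀ y ∈ ball (0:ℂ) 1, Df y * (1 - y^2) = p y * q y := by
    intro y hy
    have hg' := hDgne y hy
    rw [hp, hq]
    simp only
    rw [div_mul_eq_mul_div, mul_comm (Dg y) (1 - y^2), ← mul_assoc, mul_div_assoc, div_self hg', mul_one]
  have hderiv_eq : deriv Df z * (1-z^2) + Df z * (-(2*z)) = deriv p z * q z + p z * deriv q z := by
    have h1 : HasDerivAt (fun y : ℂ => Df y * (1-y^2)) (deriv Df z * (1-z^2) + Df z * (-(2*z))) z := by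
      have hpow : HasDerivAt (fun y : ℂ => 1 - y^2) (-(2*z)) z := by
        have := (hasDerivAt_pow 2 z).const_sub 1
        simpa using this
      exact hDfz_at.hasDerivAt.mul hpow
    have h2 : HasDerivAt (fun y : ℂ => p y * q y) (deriv p z * q z + p z * deriv q z) z :=
      hpz_at.hasDerivAt.mul hqz_at.hasDerivAt
    have heq : (fun y : ℂ => Df y * (1-y^2)) =ᶠ[nhds z] (fun y : ℂ => p y * q y) := by
      filter_upwards [isOpen_ball.mem_nhds hzb] with y hy
      exact hprod y hy
    rw [← h1.deriv, ← h2.deriv]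
    exact Filter.EventuallyEq.deriv_eq heq
  -- nonvanishing at z
  have hfzne : f z ≠ 0 := hfne z hzb hzne
  have hDfzne : Df z ≠ 0 := by
    intro h
    apply hfzne
    rw [hfy z, h, mul_zero]
  have hDgzne : Dg z ≠ 0 := hDgne z hzb
  have hpzne : p z ≠ 0 := by
    intro h
    have := hppos z hzb
    rw [h] at this; simp at this
  have hqzne : q z ≠ 0 := by
    intro h
    have := hqpos z hzb
    rw [h] at this; simp at this
  have h1z2 : (1:ℂ) - z^2 ≠ 0 := by
    intro h
    rw [sub_eq_zero] at h
    have : ‖z^2‖ = 1 := by rw [← h]; simp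
    rw [norm_pow] at this
    nlinarith [norm_nonneg z, norm_nonneg z]
  -- Claim A
  have hclaim : z * deriv f z / f z - 1
      = z * deriv p z / p z + z * deriv q z / q z + 2*z^2/(1-z^2) := by
    have hDf_eq : Df z = p z * q z / (1 - z^2) := by
      rw [← hprod z hzb]
      field_simp
    have e1 : z * deriv f z / f z - 1 = z * deriv Df z / Df z := by
      rw [hderivf, hfy z]
      field_simp
      ring
    rw [e1]
    have key : z * deriv Df z * (p z * q z * (1 - z^2))
        = ((z * deriv p z * q z + p z * (z * deriv q z)) * (1 - z^2) + 2*z^2 * (p z * q z)) * Df z := by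
      linear_combination (z * p z * q z) * hderiv_eq
        + (- z*(deriv p z * q z + p z * deriv q z)) * hprod z hzb
    rw [div_add_div _ _ hpzne hqzne, div_add_div _ _ (mul_ne_zero hpzne hqzne) h1z2,
      div_eq_div_iff hDfzne (mul_ne_zero (mul_ne_zero hpzne hqzne) h1z2)]
    linear_combination key
  -- absolute value bound
  set r : ℝ := ‖z‖ with hr
  have hr0 : 0 < r := hz0
  have habs3 : ‖2*z^2/(1-z^2)‖ ≤ 2*r^2/(1-r^2) := by
    rw [norm_div, norm_mul, norm_pow]
    have hlow : 1 - r^2 ≤ ‖1 - z^2‖ := by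
      have := norm_sub_norm_le (1:ℂ) (z^2)
      simp only [norm_one, norm_pow] at this
      linarith
    have hrpos : (0:ℝ) < 1 - r^2 := by nlinarith
    apply div_le_div₀ (by positivity) (by simp [hr]) hrpos hlow
  have hbp := carat_bound hpd hppos hp0 hz1
  have hbq := carat_bound hqd hqpos hq0 hz1
  rw [hp'0] at hbp
  rw [hq'0] at hbq
  rw [← hr] at hbp hbq
  have hmabs : ‖4*b - 2*c‖ = m := hm.symm
  have hnabs : ‖2*c‖ = n := hn.symm
  rw [hmabs] at hbp
  rw [hnabs] at hbq
  -- P(r) < 0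
  have hm0 : 0 ≤ m := by rw [hm]; exact norm_nonneg _
  have hn0 : 0 ≤ n := by rw [hn]; exact norm_nonneg _
  have hPneg : (1-s) + (2-s)*(m+n)*r + (11-s+3*m*n-s*m*n)*r^2 + 8*(m+n)*r^3
      + (11+s+3*m*n+s*m*n)*r^4 + (2+s)*(m+n)*r^5 + (1+s)*r^6 < 0 := by
    set Q : ℝ → ℝ := fun x => (1-s) + (2-s)*(m+n)*x + (11-s+3*m*n-s*m*n)*x^2 + 8*(m+n)*x^3
      + (11+s+3*m*n+s*m*n)*x^4 + (2+s)*(m+n)*x^5 + (1+s)*x^6 with hQ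
    have hQc : ContinuousOn Q (Icc 0 r) := by
      apply Continuous.continuousOn
      rw [hQ]
      exact (continuous_const.add (continuous_const.mul continuous_id)|>.add
        ((continuous_const.mul (continuous_pow 2)))|>.add
        ((continuous_const.mul (continuous_pow 3)))|>.add
        ((continuous_const.mul (continuous_pow 4)))|>.add
        ((continuous_const.mul (continuous_pow 5)))|>.add
        ((continuous_const.mul (continuous_pow 6))))
    have hQ0 : Q 0 < 0 := by
      simp only [hQ]
      norm_num
      linarith
    by_contra hcon
    push_neg at hcon
    have h0 : (0:ℝ) ∈ Icc (Q 0) (Q r) := ⟨hQ0.le, hcon⟩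
    obtain ⟨x, hx, hQx⟩ := intermediate_value_Icc (le_of_lt hr0) hQc h0
    have hxne : x ≠ 0 := by
      intro h; rw [h] at hQx; rw [hQx] at hQ0; exact lt_irrefl 0 hQ0
    have hx0 : 0 < x := lt_of_le_of_ne hx.1 (Ne.symm hxne)
    have hx1 : x < 1 := lt_of_le_of_lt hx.2 (hzρ.trans hρ1)
    simp only [hQ] at hQx
    have hrle := hsmall x ⟨hx0, hx1⟩ hQx
    linarith [hx.2]
  have hδ := real_step3 hs hr0 (hzρ.trans hρ1) hm0 hn0 hPneg
  -- combine
  set X := z * deriv f z / f z with hX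
  have hXm1 : ‖X - 1‖ < s - 1 := by
    rw [hX, hclaim]
    calc ‖z * deriv p z / p z + z * deriv q z / q z + 2*z^2/(1-z^2)‖
        ≤ ‖z * deriv p z / p z‖ + ‖z * deriv q z / q z‖
          + ‖2*z^2/(1-z^2)‖ := by
          exact le_trans (norm_add_le _ _)
            (add_le_add_left (norm_add_le _ _) _)
    _ ≤ r * (m + 4*r + m*r^2) / ((1-r^2)*(1+m*r+r^2))
          + r * (n + 4*r + n*r^2) / ((1-r^2)*(1+n*r+r^2)) + 2*r^2/(1-r^2) := by
          exact add_le_add (add_le_add (hbp.trans (le_of_eq (by ring)))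
            (hbq.trans (le_of_eq (by ring)))) habs3
    _ < s - 1 := hδ
  -- conclude
  have hXp1 : ‖X + 1‖ ≤ ‖X - 1‖ + 2 := by
    calc ‖X + 1‖ = ‖(X - 1) + 2‖ := by ring_nf
    _ ≤ ‖X - 1‖ + ‖(2:ℂ)‖ := norm_add_le _ _
    _ = ‖X - 1‖ + 2 := by simp
  have hfactor : X^2 - 1 = (X - 1) * (X + 1) := by ring
  rw [hfactor, norm_mul]
  have he0 : 0 ≤ ‖X - 1‖ := norm_nonneg _
  nlinarith [mul_le_mul_of_nonneg_left hXp1 he0, hXm1, hs2, hs1]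

end Main
end
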